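/- arXiv:2602.21579 — 8 statements merged into one kernel-verified Lean document; each statement's English description precedes it below -/
import Mathlib

section
/- Let (R_n)_{n≥1} be a sequence of real-valued random variables on a probability space (Ω, 𝒜, P) such that √n · R_n → 0 almost surely as n → ∞. Then the sequence (R_n) satisfies the uniform continuity in probability (u.c.i.p.) condition. -/
open MeasureTheory Filter Topology

/-- A sequence `Y` of real-valued random variables satisfies the
*uniform continuity in probability* (u.c.i.p.) condition: for every `ε > 0`
there exist `ν ∈ (0,1)` and `n₀ ∈ ℕ` such that for every `n ≥ n₀`,
`P( max_{n' : |n' − n| ≤ ν n} |Y_{n'} − Y_n| ≥ ε ) < ε`. -/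
def UCIP {Ω : Type*} [MeasurableSpace Ω] (P : Measure Ω) (Y : ℕ → Ω → ℝ) : Prop :=
  ∀ ε : ℝ, 0 < ε → ∃ ν : ℝ, ν ∈ Set.Ioo (0 : ℝ) 1 ∧ ∃ n₀ : ℕ, ∀ n : ℕ, n₀ ≤ n →
    P {x | ∃ n' : ℕ, |(n' : ℝ) - (n : ℝ)| ≤ ν * n ∧ ε ≤ |Y n' x - Y n x|} <
      ENNReal.ofReal ε

/-- If `√n · R_n → 0` almost surely, then `(R_n)` satisfies the u.c.i.p. condition. -/
theorem ucip_of_sqrt_mul_tendsto_ae {Ω : Type*} [MeasurableSpace Ω]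
    (P : Measure Ω) [IsProbabilityMeasure P]
    (R : ℕ → Ω → ℝ) (hmeas : ∀ n, Measurable (R n))
    (h : ∀ᵐ x ∂P, Tendsto (fun n : ℕ => Real.sqrt n * R n x) atTop (𝓝 0)) :
    UCIP P R := by
  intro ε hε
  refine ⟨1/2, ⟨by norm_num, by norm_num⟩, ?_⟩
  have hR : ∀ᵐ x ∂P, Tendsto (fun n : ℕ => R n x) atTop (𝓝 0) := by
    filter_upwards [h] with x hx
    have ev : ∀ᶠ n : ℕ in atTop, ‖R n x‖ ≤ |Real.sqrt n * R n x| := by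
      filter_upwards [eventually_ge_atTop 1] with n hn
      have h1 : (1:ℝ) ≤ Real.sqrt n := by
        rw [show (1:ℝ) = Real.sqrt 1 by simp]
        exact Real.sqrt_le_sqrt (by exact_mod_cast hn)
      rw [abs_mul, abs_of_nonneg (Real.sqrt_nonneg _)]
      exact le_mul_of_one_le_left (abs_nonneg _) h1
    exact squeeze_zero_norm' ev (by simpa using hx.abs)
  set A : ℕ → Set Ω := fun M => ⋃ m ∈ Set.Ici M, {x | ε/2 ≤ |R m x|} with hA
  have hAmeas : ∀ M, MeasurableSet (A M) := by
    intro M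
    refine MeasurableSet.biUnion (Set.to_countable _) fun m _ => ?_
    exact measurableSet_le measurable_const (hmeas m).norm
  have hanti : Antitone A := by
    intro i j hij
    exact Set.biUnion_subset_biUnion_left (Set.Ici_subset_Ici.2 hij)
  have hnull : P (⋂ M, A M) = 0 := by
    have : ∀ᵐ x ∂P, x ∉ ⋂ M, A M := by
      filter_upwards [hR] with x hx
      intro hxmem
      rw [Set.mem_iInter] at hxmem
      have := (Metric.tendsto_atTop.1 hx) (ε/2) (by linarith)
      obtain ⟨N, hN⟩ := this
      obtain ⟨m, hm, hmx⟩ := by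
        have := hxmem N
        simpa only [hA, Set.mem_iUnion, Set.mem_Ici, Set.mem_setOf_eq, exists_prop] using this
      have := hN m hm
      rw [Real.dist_eq, sub_zero] at this
      linarith
    exact measure_eq_zero_iff_ae_notMem.2 this
  have htend : Tendsto (fun M => P (A M)) atTop (𝓝 0) := by
    rw [← hnull]
    exact tendsto_measure_iInter_atTop (fun i => (hAmeas i).nullMeasurableSet) hanti ⟨0, measure_ne_top _ _⟩
  have : ∀ᶠ M in atTop, P (A M) < ENNReal.ofReal ε :=
    htend.eventually_lt_const (by simp [hε])
  obtain ⟨M, hM⟩ := this.exists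
  refine ⟨2 * M, fun n hn => ?_⟩
  refine lt_of_le_of_lt (measure_mono ?_) hM
  rintro x ⟨n', hn', hεx⟩
  have hMn : (M : ℝ) ≤ (n : ℝ) / 2 := by
    have h2 : ((2 * M : ℕ) : ℝ) ≤ (n : ℝ) := by exact_mod_cast hn
    push_cast at h2
    linarith
  have hn'ge : (M : ℝ) ≤ (n' : ℝ) := by
    have := abs_le.1 hn'
    linarith [this.1]
  have hnge : M ≤ n := by
    have : (M:ℝ) ≤ (n:ℝ) := by linarith
    exact_mod_cast this
  have hn'geN : M ≤ n' := by exact_mod_cast hn'ge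
  have : ε/2 ≤ |R n' x| ∨ ε/2 ≤ |R n x| := by
    by_contra hcon
    push_neg at hcon
    have := abs_sub_abs_le_abs_sub (R n' x) (R n x)
    have h2 := abs_sub (R n' x) (R n x)
    have : |R n' x - R n x| ≤ |R n' x| + |R n x| := abs_sub _ _
    linarith
  rcases this with h1 | h1
  · exact Set.mem_biUnion hn'geN h1
  · exact Set.mem_biUnion hnge h1
end

section
/- Let (Y_n)_{n≥1} be a sequence of real-valued random variables on a probability space (Ω, 𝒜, P) satisfying the uniform continuity in probability (u.c.i.p.) condition. Let (n_k)_{k≥1} be positive integers with n_k → ∞, and let (N_k)_{k≥1} be measurable ℕ-valued random variables such that N_k / n_k → 1 in probability as k → ∞. Then Y_{N_k} − Y_{n_k} → 0 in probability as k → ∞. -/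
open MeasureTheory Filter Topology

/-- If `(Y_n)` satisfies the u.c.i.p. condition, `n_k → ∞` are positive integers,
and `N_k` are random indices with `N_k / n_k → 1` in probability, then
`Y_{N_k} − Y_{n_k} → 0` in probability. -/
theorem random_index_diff_tendsto_zero_of_ucip {Ω : Type*} [MeasurableSpace Ω]
    (P : Measure Ω) [IsProbabilityMeasure P]
    (Y : ℕ → Ω → ℝ) (hYmeas : ∀ n, Measurable (Y n)) (hY : UCIP P Y)
    (n : ℕ → ℕ) (hpos : ∀ k, 0 < n k) (hn : Tendsto n atTop atTop)
    (N : ℕ → Ω → ℕ) (hNmeas : ∀ k, Measurable (N k))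
    (hN : ∀ ε : ℝ, 0 < ε →
      Tendsto (fun k => P {x | ε ≤ |(N k x : ℝ) / (n k : ℝ) - 1|}) atTop (𝓝 0)) :
    ∀ η : ℝ, 0 < η →
      Tendsto (fun k => P {x | η ≤ |Y (N k x) x - Y (n k) x|}) atTop (𝓝 0) := by
  intro η hη
  rw [ENNReal.tendsto_atTop_zero]
  intro ε hε
  -- get a positive real r with ofReal r ≤ ε
  obtain ⟨r, hr0, hrε⟩ : ∃ r : ℝ, 0 < r ∧ ENNReal.ofReal r ≤ ε := by
    rcases eq_or_ne ε ⊤ with h | h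
    · exact ⟨1, one_pos, by simp [h]⟩
    · refine ⟨ε.toReal, ENNReal.toReal_pos hε.ne' h, ?_⟩
      simp [ENNReal.ofReal_toReal h]
  set ε₀ : ℝ := min η (r / 2) with hε₀def
  have hε₀ : 0 < ε₀ := lt_min hη (by linarith)
  obtain ⟨ν, hν, n₀, hUC⟩ := hY ε₀ hε₀
  have h1 : ∀ᶠ k in atTop, n₀ ≤ n k := hn.eventually_ge_atTop n₀
  have h2 : ∀ᶠ k in atTop,
      P {x | ν ≤ |(N k x : ℝ) / (n k : ℝ) - 1|} < ENNReal.ofReal (r / 2) :=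
    (hN ν hν.1).eventually_lt_const (by positivity)
  rw [eventually_atTop] at h1 h2
  obtain ⟨K1, hK1⟩ := h1
  obtain ⟨K2, hK2⟩ := h2
  refine ⟨max K1 K2, fun k hk => ?_⟩
  have hk1 := hK1 k (le_trans (le_max_left _ _) hk)
  have hk2 := hK2 k (le_trans (le_max_right _ _) hk)
  have hsub : {x | η ≤ |Y (N k x) x - Y (n k) x|} ⊆
      {x | ν ≤ |(N k x : ℝ) / (n k : ℝ) - 1|} ∪
      {x | ∃ n' : ℕ, |(n' : ℝ) - (n k : ℝ)| ≤ ν * (n k) ∧ ε₀ ≤ |Y n' x - Y (n k) x|} := by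
    intro x hx
    by_cases hc : ν ≤ |(N k x : ℝ) / (n k : ℝ) - 1|
    · exact Or.inl hc
    · right
      push_neg at hc
      have hnk : (0 : ℝ) < (n k : ℝ) := by exact_mod_cast hpos k
      refine ⟨N k x, ?_, le_trans (min_le_left _ _) hx⟩
      have heq : |(N k x : ℝ) - (n k : ℝ)| = |(N k x : ℝ) / (n k : ℝ) - 1| * (n k : ℝ) := by
        rw [← abs_of_pos hnk, ← abs_mul]
        congr 1
        field_simp
        rw [abs_of_pos hnk]; ring
      rw [heq]
      exact mul_le_mul_of_nonneg_right hc.le hnk.le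
  calc P {x | η ≤ |Y (N k x) x - Y (n k) x|}
      ≤ P ({x | ν ≤ |(N k x : ℝ) / (n k : ℝ) - 1|} ∪
          {x | ∃ n' : ℕ, |(n' : ℝ) - (n k : ℝ)| ≤ ν * (n k) ∧ ε₀ ≤ |Y n' x - Y (n k) x|}) :=
        measure_mono hsub
    _ ≤ P {x | ν ≤ |(N k x : ℝ) / (n k : ℝ) - 1|} +
          P {x | ∃ n' : ℕ, |(n' : ℝ) - (n k : ℝ)| ≤ ν * (n k) ∧ ε₀ ≤ |Y n' x - Y (n k) x|} :=
        measure_union_le _ _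
    _ ≤ ENNReal.ofReal (r / 2) + ENNReal.ofReal (r / 2) := by
        exact add_le_add hk2.le
          (le_trans (hUC (n k) hk1).le (ENNReal.ofReal_le_ofReal (min_le_right _ _)))
    _ = ENNReal.ofReal r := by rw [← ENNReal.ofReal_add (by linarith) (by linarith)]; ring_nf
    _ ≤ ε := hrε
end

section
/- Let (Y_n)_{n≥1} be a sequence of real-valued random variables on a probability space (Ω, 𝒜, P) satisfying the uniform continuity in probability (u.c.i.p.) condition and converging in distribution to the normal law N(0, σ²) with σ > 0. Let (n_k)_{k≥1} be positive integers with n_k → ∞, and let (N_k)_{k≥1} be measurable ℕ-valued random variables such that N_k / n_k → 1 in probability as k → ∞. Then the randomly indexed sequence Y_{N_k} converges in distribution to N(0, σ²) as k → ∞. -/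
open MeasureTheory ProbabilityTheory Filter Topology

lemma tail_small (μ : Measure ℝ) [IsProbabilityMeasure μ] {ε : ℝ} (hε : 0 < ε) :
    ∃ M : ℝ, 1 ≤ M ∧ μ {x : ℝ | M ≤ |x|} < ENNReal.ofReal ε := by
  have hmeas : ∀ m : ℕ, MeasurableSet {x : ℝ | (m : ℝ) ≤ |x|} := fun m =>
    measurableSet_le measurable_const measurable_abs
  have hanti : Antitone (fun m : ℕ => {x : ℝ | (m : ℝ) ≤ |x|}) := by
    intro a b hab x hx
    exact le_trans ((Nat.cast_le (α := ℝ)).mpr hab) hx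
  have hiInter : ⋂ m : ℕ, {x : ℝ | (m : ℝ) ≤ |x|} = ∅ := by
    ext x
    simp only [Set.mem_iInter, Set.mem_setOf_eq, Set.mem_empty_iff_false, iff_false, not_forall,
      not_le]
    obtain ⟨m, hm⟩ := exists_nat_gt |x|
    exact ⟨m, hm⟩
  have := tendsto_measure_iInter_atTop (fun m => (hmeas m).nullMeasurableSet) hanti
    ⟨0, measure_ne_top μ _⟩
  rw [hiInter, measure_empty] at this
  have hev := this.eventually_lt_const (ENNReal.ofReal_pos.mpr hε)
  obtain ⟨m, hm⟩ := hev.exists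
  refine ⟨max m 1, le_max_right _ _, lt_of_le_of_lt ?_ hm⟩
  exact measure_mono (fun x hx => show (m:ℝ) ≤ |x| from le_trans (le_max_left _ _) hx)

lemma cutoff_exists (M₀ : ℝ) : ∃ g : BoundedContinuousFunction ℝ ℝ,
    (∀ y, 0 ≤ g y) ∧ (∀ y, g y ≤ Set.indicator {y : ℝ | M₀ ≤ |y|} 1 y) ∧
    (∀ y, M₀ + 1 ≤ |y| → g y = 1) := by
  classical
  have hcont : Continuous (fun y : ℝ => max 0 (min 1 (|y| - M₀))) := by
    exact continuous_const.max (continuous_const.min (continuous_abs.sub continuous_const))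
  have hmem : ∀ y : ℝ, max 0 (min 1 (|y| - M₀)) ∈ Set.Icc (0:ℝ) 1 := by
    intro y
    constructor
    · exact le_max_left _ _
    · exact max_le zero_le_one (min_le_left _ _)
  refine ⟨BoundedContinuousFunction.mkOfBound ⟨_, hcont⟩ 1
    (fun x y => by simpa using Real.dist_le_of_mem_Icc (hmem x) (hmem y)), ?_, ?_, ?_⟩
  · intro y; exact (hmem y).1
  · intro y
    by_cases h : M₀ ≤ |y|
    · simp only [Set.indicator_of_mem, Set.mem_setOf_eq, h, Pi.one_apply]
      exact (hmem y).2.trans (by simp [Set.indicator_of_mem, h])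
    · have h0 : |y| - M₀ ≤ 0 := by linarith [not_le.mp h]
      have : max 0 (min 1 (|y| - M₀)) = 0 := max_eq_left ((min_le_right _ _).trans h0)
      show max 0 (min 1 (|y| - M₀)) ≤ _
      rw [this]
      exact Set.indicator_nonneg (fun _ _ => zero_le_one) y
  · intro y hy
    have h1 : (1:ℝ) ≤ |y| - M₀ := by linarith
    show max 0 (min 1 (|y| - M₀)) = 1
    rw [min_eq_left h1, max_eq_right zero_le_one]

lemma unif_delta (f : BoundedContinuousFunction ℝ ℝ) {M ε' : ℝ} (hε' : 0 < ε') :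
    ∃ δ : ℝ, 0 < δ ∧ δ ≤ 1 ∧ ∀ a b : ℝ, |a| ≤ M → |a - b| ≤ δ → |f a - f b| ≤ ε' := by
  have hK : IsCompact (Metric.closedBall (0:ℝ) (M + 1)) := isCompact_closedBall _ _
  have huc := hK.uniformContinuousOn_of_continuous f.continuous.continuousOn
  obtain ⟨δ, hδ, hδ'⟩ := Metric.uniformContinuousOn_iff.mp huc ε' hε'
  refine ⟨min δ 1 / 2, by positivity, by
      have := min_le_right δ 1; linarith, fun a b ha hab => ?_⟩
  by_cases hM : 0 ≤ M
  · have haK : a ∈ Metric.closedBall (0:ℝ) (M + 1) := by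
      simp only [Metric.mem_closedBall, Real.dist_eq, sub_zero]; linarith
    have hbK : b ∈ Metric.closedBall (0:ℝ) (M + 1) := by
      simp only [Metric.mem_closedBall, Real.dist_eq, sub_zero]
      have : |b| ≤ |a| + |a - b| := by
        calc |b| = |a - (a - b)| := by ring_nf
        _ ≤ |a| + |a - b| := abs_sub a (a-b)
      have h1 : min δ 1 / 2 ≤ 1 := by have := min_le_right δ 1; linarith
      linarith
    have hd : dist a b < δ := by
      rw [Real.dist_eq]
      have : min δ 1 / 2 < δ := by have := min_le_left δ 1; linarith
      linarith
    have := hδ' a haK b hbK hd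
    rw [Real.dist_eq] at this
    exact this.le
  · exfalso
    have := abs_nonneg a
    linarith

/-- Anscombe's random central limit theorem: if `(Y_n)` satisfies the u.c.i.p.
condition and converges in distribution (weak convergence of laws, expressed via
integrals of bounded continuous functions) to `N(0, σ²)` with `σ > 0`, and `N_k`
are random indices with `N_k / n_k → 1` in probability where `n_k → ∞`, then
`Y_{N_k}` converges in distribution to `N(0, σ²)`. -/
theorem anscombe_random_clt {Ω : Type*} [MeasurableSpace Ω]
    (P : Measure Ω) [IsProbabilityMeasure P]
    (Y : ℕ → Ω → ℝ) (hYmeas : ∀ n, Measurable (Y n)) (hY : UCIP P Y)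
    (σ : NNReal) (hσ : 0 < σ)
    (hconv : ∀ f : BoundedContinuousFunction ℝ ℝ,
      Tendsto (fun n => ∫ x, f (Y n x) ∂P) atTop
        (𝓝 (∫ y, f y ∂(gaussianReal 0 (σ ^ 2)))))
    (n : ℕ → ℕ) (hpos : ∀ k, 0 < n k) (hn : Tendsto n atTop atTop)
    (N : ℕ → Ω → ℕ) (hNmeas : ∀ k, Measurable (N k))
    (hN : ∀ ε : ℝ, 0 < ε →
      Tendsto (fun k => P {x | ε ≤ |(N k x : ℝ) / (n k : ℝ) - 1|}) atTop (𝓝 0)) :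
    ∀ f : BoundedContinuousFunction ℝ ℝ,
      Tendsto (fun k => ∫ x, f (Y (N k x) x) ∂P) atTop
        (𝓝 (∫ y, f y ∂(gaussianReal 0 (σ ^ 2)))) := by
  intro f
  set γ := gaussianReal 0 (σ ^ 2) with hγ
  have hunc : Measurable (fun p : Ω × ℕ => Y p.2 p.1) :=
    measurable_from_prod_countable_left (fun m => hYmeas m)
  have hNYmeas : ∀ k, Measurable fun x => Y (N k x) x := fun k =>
    hunc.comp (measurable_id.prodMk (hNmeas k))
  have hint : ∀ (q : BoundedContinuousFunction ℝ ℝ) (h : Ω → ℝ), Measurable h →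
      Integrable (fun x => q (h x)) P := by
    intro q h hh
    refine Integrable.mono' (integrable_const ‖q‖)
      (q.continuous.measurable.comp hh).aestronglyMeasurable ?_
    exact Filter.Eventually.of_forall fun x => q.norm_coe_le_norm _
  have hI1 : ∀ m, Integrable (fun x => f (Y m x)) P := fun m => hint f _ (hYmeas m)
  have hI2 : ∀ k, Integrable (fun x => f (Y (N k x) x)) P := fun k => hint f _ (hNYmeas k)
  -- the key step : the difference tends to zero
  have key : Tendsto (fun k => ∫ x, (f (Y (N k x) x) - f (Y (n k) x)) ∂P) atTop (𝓝 0) := by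
    rw [NormedAddCommGroup.tendsto_nhds_zero]
    intro ε hε
    set C := ‖f‖ with hC
    have hC0 : 0 ≤ C := norm_nonneg f
    set ε' := ε / (2 * (1 + 8 * C)) with hε'def
    have hε' : 0 < ε' := by positivity
    have hε'mul : ε' * (2 * (1 + 8 * C)) = ε := by
      rw [hε'def]; field_simp
    obtain ⟨M₀, hM₀1, hM₀⟩ := tail_small γ hε'
    obtain ⟨g, hg0, hgle, hg1⟩ := cutoff_exists M₀
    obtain ⟨δ, hδ0, hδ1, hδ⟩ := unif_delta f (M := M₀ + 1) hε'
    set ε₀ := min δ ε' with hε₀def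
    have hε₀ : 0 < ε₀ := lt_min hδ0 hε'
    obtain ⟨ν, hν, n₀, hucip⟩ := hY ε₀ hε₀
    have hev1 : ∀ᶠ k in atTop, n₀ ≤ n k := hn.eventually_ge_atTop n₀
    have hev2 : ∀ᶠ k in atTop,
        P {x | ν ≤ |(N k x : ℝ) / (n k : ℝ) - 1|} < ENNReal.ofReal ε' :=
      (hN ν hν.1).eventually_lt_const (ENNReal.ofReal_pos.mpr hε')
    have hM₀meas : MeasurableSet {y : ℝ | M₀ ≤ |y|} :=
      measurableSet_le measurable_const measurable_abs
    have hgint : ∫ y, g y ∂γ < ε' := by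
      calc ∫ y, g y ∂γ ≤ ∫ y, Set.indicator {y : ℝ | M₀ ≤ |y|} 1 y ∂γ :=
            integral_mono (g.integrable γ) ((integrable_const (1:ℝ)).indicator hM₀meas) hgle
        _ = (γ {y : ℝ | M₀ ≤ |y|}).toReal := integral_indicator_one hM₀meas
        _ < ε' := ENNReal.toReal_lt_of_lt_ofReal hM₀
    have hev3 : ∀ᶠ k in atTop, ∫ x, g (Y (n k) x) ∂P < ε' :=
      ((hconv g).comp hn).eventually_lt_const hgint
    filter_upwards [hev1, hev2, hev3] with k hk1 hk2 hk3
    set D : Set Ω := {x | δ ≤ |Y (N k x) x - Y (n k) x|} with hD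
    set T : Set Ω := {x | M₀ + 1 ≤ |Y (n k) x|} with hT
    have hDmeas : MeasurableSet D :=
      measurableSet_le measurable_const ((hNYmeas k).sub (hYmeas (n k))).abs
    have hTmeas : MeasurableSet T :=
      measurableSet_le measurable_const (hYmeas (n k)).abs
    have hSmeas : MeasurableSet (D ∪ T) := hDmeas.union hTmeas
    -- pointwise bound
    have hpt : ∀ x, ‖f (Y (N k x) x) - f (Y (n k) x)‖ ≤
        ε' + (2 * C) * (D ∪ T).indicator 1 x := by
      intro x
      by_cases hx : x ∈ D ∪ T
      · rw [Set.indicator_of_mem hx, Pi.one_apply]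
        have h1 := f.norm_coe_le_norm (Y (N k x) x)
        have h2 := f.norm_coe_le_norm (Y (n k) x)
        calc ‖f (Y (N k x) x) - f (Y (n k) x)‖ ≤ ‖f (Y (N k x) x)‖ + ‖f (Y (n k) x)‖ :=
              norm_sub_le _ _
          _ ≤ ε' + (2 * C) * 1 := by simp only [hC]; linarith
      · rw [Set.indicator_of_notMem hx, mul_zero, add_zero]
        rw [Set.mem_union, not_or] at hx
        have hd : ¬ δ ≤ |Y (N k x) x - Y (n k) x| := hx.1
        have ht : ¬ M₀ + 1 ≤ |Y (n k) x| := hx.2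
        have := hδ (Y (n k) x) (Y (N k x) x) (not_le.mp ht).le
          (by rw [abs_sub_comm]; exact (not_le.mp hd).le)
        rw [Real.norm_eq_abs, abs_sub_comm]
        exact this
    -- bound on P T
    have hPT : P T ≤ ENNReal.ofReal ε' := by
      have hTle : (P T).toReal ≤ ∫ x, g (Y (n k) x) ∂P := by
        rw [← measureReal_def, ← integral_indicator_one hTmeas]
        refine integral_mono ((integrable_const (1:ℝ)).indicator hTmeas)
          (hint g _ (hYmeas (n k))) ?_
        intro x
        show T.indicator 1 x ≤ g (Y (n k) x)
        by_cases hx : x ∈ T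
        · rw [Set.indicator_of_mem hx, Pi.one_apply, hg1 _ hx]
        · rw [Set.indicator_of_notMem hx]
          exact hg0 _
      have : (P T).toReal < ε' := lt_of_le_of_lt hTle hk3
      exact ((ENNReal.lt_ofReal_iff_toReal_lt (measure_ne_top P T)).mpr this).le
    -- bound on P D
    have hPD : P D ≤ ENNReal.ofReal ε' + ENNReal.ofReal ε' := by
      have hsub : D ⊆ {x | ν ≤ |(N k x : ℝ) / (n k : ℝ) - 1|} ∪
          {x | ∃ n' : ℕ, |(n' : ℝ) - (n k : ℝ)| ≤ ν * (n k) ∧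
            ε₀ ≤ |Y n' x - Y (n k) x|} := by
        intro x hx
        by_cases hU : ν ≤ |(N k x : ℝ) / (n k : ℝ) - 1|
        · exact Or.inl hU
        · right
          refine ⟨N k x, ?_, le_trans (min_le_left δ ε') hx⟩
          have hnk : (0:ℝ) < (n k : ℝ) := Nat.cast_pos.mpr (hpos k)
          have habs : |(N k x : ℝ) - (n k : ℝ)| = |(N k x : ℝ) / (n k : ℝ) - 1| * (n k : ℝ) := by
            rw [show (N k x : ℝ) / (n k : ℝ) - 1 = ((N k x : ℝ) - (n k : ℝ)) / (n k : ℝ) by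
              field_simp]
            rw [abs_div, abs_of_pos hnk, div_mul_cancel₀ _ hnk.ne']
          rw [habs]
          exact mul_le_mul_of_nonneg_right (not_le.mp hU).le hnk.le
      calc P D ≤ P ({x | ν ≤ |(N k x : ℝ) / (n k : ℝ) - 1|} ∪
            {x | ∃ n' : ℕ, |(n' : ℝ) - (n k : ℝ)| ≤ ν * (n k) ∧
              ε₀ ≤ |Y n' x - Y (n k) x|}) := measure_mono hsub
        _ ≤ P {x | ν ≤ |(N k x : ℝ) / (n k : ℝ) - 1|} +
            P {x | ∃ n' : ℕ, |(n' : ℝ) - (n k : ℝ)| ≤ ν * (n k) ∧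
              ε₀ ≤ |Y n' x - Y (n k) x|} := measure_union_le _ _
        _ ≤ ENNReal.ofReal ε' + ENNReal.ofReal ε' := by
            refine add_le_add hk2.le ?_
            refine le_trans (hucip (n k) hk1).le (ENNReal.ofReal_le_ofReal ?_)
            exact min_le_right δ ε'
    -- bound on P (D ∪ T)
    have hPS : (P (D ∪ T)).toReal ≤ 3 * ε' := by
      refine ENNReal.toReal_le_of_le_ofReal (by positivity) ?_
      calc P (D ∪ T) ≤ P D + P T := measure_union_le _ _
        _ ≤ (ENNReal.ofReal ε' + ENNReal.ofReal ε') + ENNReal.ofReal ε' := add_le_add hPD hPT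
        _ = ENNReal.ofReal (3 * ε') := by
            rw [← ENNReal.ofReal_add hε'.le hε'.le, ← ENNReal.ofReal_add (by positivity) hε'.le]
            ring_nf
    -- assemble
    have hIind2 : Integrable (fun x => (2 * C) * (D ∪ T).indicator 1 x) P := by
      exact ((integrable_const (1:ℝ)).indicator hSmeas).const_mul (2 * C)
    have hIind : Integrable (fun x => ε' + (2 * C) * (D ∪ T).indicator 1 x) P :=
      (integrable_const ε').add hIind2
    calc ‖∫ x, (f (Y (N k x) x) - f (Y (n k) x)) ∂P‖
        ≤ ∫ x, ‖f (Y (N k x) x) - f (Y (n k) x)‖ ∂P := norm_integral_le_integral_norm _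
      _ ≤ ∫ x, (ε' + (2 * C) * (D ∪ T).indicator 1 x) ∂P :=
          integral_mono ((hI2 k).sub (hI1 (n k))).norm hIind hpt
      _ = ε' + (2 * C) * (P (D ∪ T)).toReal := by
          rw [integral_add (integrable_const _) hIind2,
            integral_const, MeasureTheory.integral_const_mul, integral_indicator_one hSmeas]
          simp [measure_univ, measureReal_def]
      _ ≤ ε' + (2 * C) * (3 * ε') := by
          exact add_le_add_right (mul_le_mul_of_nonneg_left hPS (by positivity)) _
      _ < ε := by nlinarith
  have h2 : Tendsto (fun k => ∫ x, f (Y (n k) x) ∂P) atTop (𝓝 (∫ y, f y ∂γ)) :=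
    (hconv f).comp hn
  have heq : (fun k => ∫ x, f (Y (N k x) x) ∂P) =
      (fun k => (∫ x, (f (Y (N k x) x) - f (Y (n k) x)) ∂P) + ∫ x, f (Y (n k) x) ∂P) := by
    funext k
    rw [integral_sub (hI2 k) (hI1 (n k))]
    ring
  rw [heq]
  simpa using key.add h2
end

section
/- Let a > 0, δ > 0, L > 0, and let (v_n)_{n≥1} be nonnegative reals with v_n → L as n → ∞. Let m : (0,∞) → ℕ satisfy m(ω) ≥ 1 for all ω and ω² m(ω) → 0 as ω → 0⁺. For each ω > 0 define N(ω) = inf{ n ∈ ℕ : n ≥ m(ω) and n ≥ (a/ω²)(v_n + n^{−δ}) }. Then ω² N(ω) → a L as ω → 0⁺ (equivalently, N(ω)/C(ω) → 1 where C(ω) = a L / ω²). -/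
open Filter Topology

/-- The set defining the stopping rule: integers `n ≥ m` with
`n ≥ A (v_n + n^{−δ})`. -/
def stopSet (A δ : ℝ) (m : ℕ) (v : ℕ → ℝ) : Set ℕ :=
  {n : ℕ | m ≤ n ∧ A * (v n + (n : ℝ) ^ (-δ)) ≤ (n : ℝ)}

/-- The stopping index `N = inf{ n ∈ ℕ : n ≥ m and n ≥ A (v_n + n^{−δ}) }`. -/
noncomputable def stopIndex (A δ : ℝ) (m : ℕ) (v : ℕ → ℝ) : ℕ :=
  sInf (stopSet A δ m v)

lemma stopSet_nonempty {A δ : ℝ} (hA : 0 ≤ A) (hδ : 0 < δ) {m : ℕ} (hm : 1 ≤ m)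
    {v : ℕ → ℝ} {B : ℝ} (hB : ∀ n, v n ≤ B) : (stopSet A δ m v).Nonempty := by
  refine ⟨max m ⌈A * (B + 1)⌉₊, le_max_left _ _, ?_⟩
  set n := max m ⌈A * (B + 1)⌉₊ with hn
  have hn1 : 1 ≤ n := le_trans hm (le_max_left _ _)
  have hn1' : (1 : ℝ) ≤ (n : ℝ) := by exact_mod_cast hn1
  have hpow : (n : ℝ) ^ (-δ) ≤ 1 :=
    Real.rpow_le_one_of_one_le_of_nonpos hn1' (by linarith)
  calc A * (v n + (n : ℝ) ^ (-δ)) ≤ A * (B + 1) := by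
        apply mul_le_mul_of_nonneg_left _ hA; linarith [hB n]
    _ ≤ (⌈A * (B + 1)⌉₊ : ℝ) := Nat.le_ceil _
    _ ≤ (n : ℝ) := by exact_mod_cast le_max_right m _

set_option maxHeartbeats 1000000 in
/-- Deterministic first-order efficiency: if `v_n → L > 0` and the pilot size
`m(ω)` satisfies `ω² m(ω) → 0` as `ω → 0⁺`, then the stopping index
`N(ω) = inf{ n : n ≥ m(ω), n ≥ (a/ω²)(v_n + n^{−δ}) }` satisfies
`ω² N(ω) → a L` as `ω → 0⁺`, i.e. `N(ω)/C(ω) → 1` with `C(ω) = a L/ω²`. -/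
theorem stopping_index_asymptotic (a δ L : ℝ) (ha : 0 < a) (hδ : 0 < δ) (hL : 0 < L)
    (v : ℕ → ℝ) (hv : ∀ n, 0 ≤ v n) (hvL : Tendsto v atTop (𝓝 L))
    (m : ℝ → ℕ) (hm : ∀ ω, 1 ≤ m ω)
    (hm0 : Tendsto (fun ω : ℝ => ω ^ 2 * (m ω : ℝ)) (𝓝[>] 0) (𝓝 0)) :
    Tendsto (fun ω : ℝ => ω ^ 2 * (stopIndex (a / ω ^ 2) δ (m ω) v : ℝ))
      (𝓝[>] 0) (𝓝 (a * L)) := by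
  obtain ⟨B, hB⟩ : ∃ B, ∀ n, v n ≤ B := by
    obtain ⟨B, hB⟩ := hvL.bddAbove_range
    exact ⟨B, fun n => hB ⟨n, rfl⟩⟩
  rw [Metric.tendsto_nhds]
  intro ε hε
  set ε₁ := ε / (2 * a + 2) with hε₁def
  have hε₁ : 0 < ε₁ := div_pos hε (by linarith)
  set ε₂ := min ε₁ (L / 2) with hε₂def
  have hε₂ : 0 < ε₂ := lt_min hε₁ (by linarith)
  have hε₂₁ : ε₂ ≤ ε₁ := min_le_left _ _
  have hε₂L : ε₂ ≤ L / 2 := min_le_right _ _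
  obtain ⟨n₁, hn₁⟩ := Metric.tendsto_atTop.1 hvL ε₂ hε₂
  have hrt : Tendsto (fun n : ℕ => (n : ℝ) ^ (-δ)) atTop (𝓝 0) :=
    (tendsto_rpow_neg_atTop hδ).comp tendsto_natCast_atTop_atTop
  obtain ⟨n₂, hn₂⟩ := Metric.tendsto_atTop.1 hrt ε₂ hε₂
  set n₀ := max n₁ n₂ with hn₀def
  have hsq : Tendsto (fun ω : ℝ => ω ^ 2) (𝓝[>] (0 : ℝ)) (𝓝 0) := by
    have h : Tendsto (fun ω : ℝ => ω ^ 2) (𝓝 (0 : ℝ)) (𝓝 0) := by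
      simpa using (continuous_pow 2).tendsto (0 : ℝ)
    exact h.mono_left nhdsWithin_le_nhds
  have hP : (0 : ℝ) < ((n₀ : ℝ) + 1) ^ (1 + δ) :=
    Real.rpow_pos_of_pos (by positivity) _
  have E1 : ∀ᶠ ω in 𝓝[>] (0 : ℝ), ω ^ 2 * (m ω : ℝ) < a * L / 2 :=
    hm0.eventually_lt_const (by positivity)
  have E2 : ∀ᶠ ω in 𝓝[>] (0 : ℝ), ω ^ 2 < a / ((n₀ : ℝ) + 1) ^ (1 + δ) :=
    hsq.eventually_lt_const (by positivity)
  have E3 : ∀ᶠ ω in 𝓝[>] (0 : ℝ), ω ^ 2 < ε₁ := hsq.eventually_lt_const hε₁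
  filter_upwards [E1, E2, E3, self_mem_nhdsWithin] with ω h1 h2 h3 hω
  have hω0 : (0 : ℝ) < ω := hω
  have hω2 : (0 : ℝ) < ω ^ 2 := by positivity
  set A := a / ω ^ 2 with hAdef
  have hA0 : 0 < A := div_pos ha hω2
  have hωA : ω ^ 2 * A = a := by
    rw [hAdef]; field_simp
  have hne := stopSet_nonempty hA0.le hδ (hm ω) hB
  set N := stopIndex A δ (m ω) v with hNdef
  have hNmem : N ∈ stopSet A δ (m ω) v := Nat.sInf_mem hne
  obtain ⟨hmN, hcond⟩ := hNmem
  have hN1 : 1 ≤ N := le_trans (hm ω) hmN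
  have hN1' : (1 : ℝ) ≤ (N : ℝ) := by exact_mod_cast hN1
  have hNpos : (0 : ℝ) < (N : ℝ) := by linarith
  have hNδpos : (0 : ℝ) < (N : ℝ) ^ (-δ) := Real.rpow_pos_of_pos hNpos _
  -- lower bound: a * (v N + N^{-δ}) ≤ ω² N
  have hlow : a * (v N + (N : ℝ) ^ (-δ)) ≤ ω ^ 2 * (N : ℝ) := by
    calc a * (v N + (N : ℝ) ^ (-δ))
        = ω ^ 2 * (A * (v N + (N : ℝ) ^ (-δ))) := by rw [← mul_assoc, hωA]
      _ ≤ ω ^ 2 * (N : ℝ) := mul_le_mul_of_nonneg_left hcond hω2.le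
  -- A ≤ N ^ (1+δ)
  have hApow : A ≤ (N : ℝ) ^ ((1 : ℝ) + δ) := by
    have h1 : A * (N : ℝ) ^ (-δ) ≤ (N : ℝ) := by
      have hvN := hv N
      nlinarith [hcond]
    have h2 := mul_le_mul_of_nonneg_right h1 (Real.rpow_pos_of_pos hNpos δ).le
    have h3 : (N : ℝ) ^ (-δ) * (N : ℝ) ^ δ = 1 := by
      rw [← Real.rpow_add hNpos, neg_add_cancel, Real.rpow_zero]
    have h4 : (N : ℝ) * (N : ℝ) ^ δ = (N : ℝ) ^ ((1 : ℝ) + δ) := by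
      rw [Real.rpow_add hNpos, Real.rpow_one]
    rw [mul_assoc, h3, mul_one, h4] at h2
    exact h2
  -- N > n₀ + 1
  have hn0N : n₀ + 1 < N := by
    by_contra hcon
    push_neg at hcon
    have hcast : (N : ℝ) ≤ (n₀ : ℝ) + 1 := by exact_mod_cast hcon
    have hle : (N : ℝ) ^ ((1 : ℝ) + δ) ≤ ((n₀ : ℝ) + 1) ^ ((1 : ℝ) + δ) :=
      Real.rpow_le_rpow hNpos.le hcast (by linarith)
    have hAgt : ((n₀ : ℝ) + 1) ^ ((1 : ℝ) + δ) < A := by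
      rw [hAdef, lt_div_iff₀ hω2]
      have := (lt_div_iff₀ hP).1 h2
      have hh : (1 : ℝ) + δ = 1 + δ := rfl
      nlinarith [this]
    linarith
  have hNn₁ : n₁ ≤ N := by omega
  have hvNc : |v N - L| < ε₂ := by
    have := hn₁ N hNn₁
    rwa [Real.dist_eq] at this
  -- m ω < N
  have hmltN : m ω < N := by
    rcases lt_or_eq_of_le hmN with h | h
    · exact h
    · exfalso
      have hNm : ω ^ 2 * (N : ℝ) < a * L / 2 := by rw [← h]; exact h1
      have hvNlb : L / 2 < v N := by
        have := abs_lt.1 hvNc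
        linarith
      nlinarith [hlow, hNδpos]
  -- N - 1 not in the stop set
  have hNot : N - 1 ∉ stopSet A δ (m ω) v := by
    apply Nat.notMem_of_lt_sInf
    have hr : sInf (stopSet A δ (m ω) v) = N := rfl
    omega
  have hfail : ((N - 1 : ℕ) : ℝ) < A * (v (N - 1) + ((N - 1 : ℕ) : ℝ) ^ (-δ)) := by
    by_contra hcon
    push_neg at hcon
    exact hNot ⟨by omega, hcon⟩
  have hcast : ((N - 1 : ℕ) : ℝ) = (N : ℝ) - 1 := by
    push_cast [Nat.cast_sub hN1]; ring
  -- bounds at N - 1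
  have hN1n : n₁ ≤ N - 1 := by omega
  have hN2n : n₂ ≤ N - 1 := by omega
  have hvN1 : |v (N - 1) - L| < ε₂ := by
    have := hn₁ (N - 1) hN1n
    rwa [Real.dist_eq] at this
  have hrpN1 : ((N - 1 : ℕ) : ℝ) ^ (-δ) < ε₂ := by
    have := hn₂ (N - 1) hN2n
    rw [Real.dist_eq, sub_zero] at this
    calc ((N - 1 : ℕ) : ℝ) ^ (-δ) ≤ |((N - 1 : ℕ) : ℝ) ^ (-δ)| := le_abs_self _
      _ < ε₂ := this
  -- upper bound
  have hup : ω ^ 2 * ((N : ℝ) - 1) < a * (v (N - 1) + ((N : ℝ) - 1) ^ (-δ)) := by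
    have h' := mul_lt_mul_of_pos_left hfail hω2
    rw [← mul_assoc, hωA, hcast] at h'
    exact h'
  rw [hcast] at hrpN1
  clear_value N A ε₁ ε₂ n₀
  -- conclude
  rw [Real.dist_eq, abs_sub_lt_iff]
  have hvub : v (N - 1) < L + ε₂ := by
    have := abs_lt.1 hvN1
    linarith
  have hvlb : L - ε₂ < v N := by
    have := abs_lt.1 hvNc
    linarith
  have h6 : (2 * a + 2) * ε₁ = ε := by
    rw [hε₁def]; field_simp
  have ha1 : a * v (N - 1) < a * (L + ε₂) := mul_lt_mul_of_pos_left hvub ha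
  have ha2 : a * (((N : ℝ) - 1) ^ (-δ)) < a * ε₂ := mul_lt_mul_of_pos_left hrpN1 ha
  have ha3 : a * ε₂ ≤ a * ε₁ := mul_le_mul_of_nonneg_left hε₂₁ ha.le
  constructor
  · -- ω² N - a L < ε
    have hsplit : a * (v (N - 1) + ((N : ℝ) - 1) ^ (-δ)) =
        a * v (N - 1) + a * (((N : ℝ) - 1) ^ (-δ)) := by ring
    rw [hsplit] at hup
    have : ω ^ 2 * (N : ℝ) = ω ^ 2 * ((N : ℝ) - 1) + ω ^ 2 := by ring
    linarith
  · -- a L - ω² N < ε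
    have ha4 : a * (L - ε₂) < a * v N := mul_lt_mul_of_pos_left hvlb ha
    have ha5 : 0 < a * ((N : ℝ) ^ (-δ)) := mul_pos ha hNδpos
    have hsplit : a * (v N + (N : ℝ) ^ (-δ)) = a * v N + a * ((N : ℝ) ^ (-δ)) := by ring
    rw [hsplit] at hlow
    linarith
end

section
/- Let (Ω, 𝒜, P) be a probability space, ξ² > 0, and let (V_n²)_{n≥1} be measurable functions V_n² : Ω → [0,∞) with V_n² → ξ² almost surely. Let a > 0, δ > 0, and let m : (0,∞) → ℕ satisfy m(ω) ≥ 1 and ω² m(ω) → 0 as ω → 0⁺. For each ω > 0 define the purely sequential stopping variable N_ω(x) = inf{ n ∈ ℕ : n ≥ m(ω) and n ≥ (a/ω²)( V_n²(x) + n^{−δ} ) } and the optimal size C_ω = a ξ² / ω². Then for P-almost every x ∈ Ω, N_ω(x)/C_ω → 1 as ω → 0⁺. -/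
open MeasureTheory Filter Topology

lemma det_ratio (ξsq a δ : ℝ) (hξ : 0 < ξsq) (ha : 0 < a) (hδ : 0 < δ)
    (v : ℕ → ℝ) (hv0 : ∀ n, 0 ≤ v n) (hv : Tendsto v atTop (𝓝 ξsq))
    (m : ℝ → ℕ) (hm : ∀ ω, 1 ≤ m ω)
    (hm0 : Tendsto (fun ω : ℝ => ω ^ 2 * (m ω : ℝ)) (𝓝[>] 0) (𝓝 0)) :
    Tendsto (fun ω : ℝ => (stopIndex (a / ω ^ 2) δ (m ω) v : ℝ) / (a * ξsq / ω ^ 2))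
      (𝓝[>] 0) (𝓝 1) := by
  rw [Metric.tendsto_nhds]
  intro ε hε
  set ε₁ : ℝ := min (ξsq / 2) (ξsq * ε / 4) with hε₁def
  have hε₁ : 0 < ε₁ := lt_min (by linarith) (by positivity)
  have hε₁a : ε₁ ≤ ξsq / 2 := min_le_left _ _
  have hε₁b : ε₁ ≤ ξsq * ε / 4 := min_le_right _ _
  -- choose n₀
  have hvn : ∀ᶠ n in atTop, v n ∈ Set.Ioo (ξsq - ε₁) (ξsq + ε₁) :=
    hv (Ioo_mem_nhds (by linarith) (by linarith))
  have hpow : Tendsto (fun n : ℕ => (n : ℝ) ^ (-δ)) atTop (𝓝 0) :=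
    (tendsto_rpow_neg_atTop hδ).comp tendsto_natCast_atTop_atTop
  have hpown : ∀ᶠ n : ℕ in atTop, (n : ℝ) ^ (-δ) ≤ ε₁ :=
    (hpow.eventually (eventually_le_nhds hε₁))
  obtain ⟨n₀, hn₀⟩ := (hvn.and hpown).exists_forall_of_atTop
  -- eventual conditions on ω
  have hsq : Tendsto (fun ω : ℝ => ω ^ 2) (𝓝[>] 0) (𝓝 0) := by
    have h : Tendsto (fun ω : ℝ => ω ^ 2) (𝓝 0) (𝓝 0) := by
      simpa using (continuous_pow 2).tendsto (0 : ℝ)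
    exact h.mono_left nhdsWithin_le_nhds
  have hω1 : ∀ᶠ ω : ℝ in 𝓝[>] 0, 0 < ω := eventually_mem_nhdsWithin
  have hω2 : ∀ᶠ ω : ℝ in 𝓝[>] 0, ω ^ 2 * (m ω : ℝ) < a * ξsq * ε / 4 :=
    hm0.eventually (eventually_lt_nhds (by positivity))
  have hω3 : ∀ᶠ ω : ℝ in 𝓝[>] 0, ω ^ 2 * ((n₀ : ℝ) + 1) < a * ξsq * ε / 4 := by
    have h := hsq.mul_const ((n₀ : ℝ) + 1)
    rw [zero_mul] at h
    exact h.eventually (eventually_lt_nhds (by positivity))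
  have hω4 : ∀ᶠ ω : ℝ in 𝓝[>] 0, ω ^ 2 * (n₀ : ℝ) ^ (1 + δ) < a := by
    have h := hsq.mul_const ((n₀ : ℝ) ^ (1 + δ))
    rw [zero_mul] at h
    exact h.eventually (eventually_lt_nhds ha)
  filter_upwards [hω1, hω2, hω3, hω4] with ω hω hA2 hA3 hA4
  have hw : (0 : ℝ) < ω ^ 2 := by positivity
  set A := a / ω ^ 2 with hAdef
  have hApos : 0 < A := by positivity
  set N := stopIndex A δ (m ω) v with hNdef
  set n₁ := max (max (m ω) n₀) ⌈A * (ξsq + 2 * ε₁)⌉₊ with hn₁def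
  have hn₁mem : n₁ ∈ stopSet A δ (m ω) v := by
    constructor
    · exact le_max_of_le_left (le_max_left _ _)
    · have hn₁0 : n₀ ≤ n₁ := le_max_of_le_left (le_max_right _ _)
      obtain ⟨hvIoo, hp⟩ := hn₀ n₁ hn₁0
      have hceil : A * (ξsq + 2 * ε₁) ≤ (n₁ : ℝ) :=
        le_trans (Nat.le_ceil _) (by exact_mod_cast le_max_right _ _)
      have hsum : v n₁ + (n₁ : ℝ) ^ (-δ) ≤ ξsq + 2 * ε₁ := by
        have := hvIoo.2; linarith
      calc A * (v n₁ + (n₁ : ℝ) ^ (-δ)) ≤ A * (ξsq + 2 * ε₁) :=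
            mul_le_mul_of_nonneg_left hsum hApos.le
        _ ≤ (n₁ : ℝ) := hceil
  have hNmem : N ∈ stopSet A δ (m ω) v := Nat.sInf_mem ⟨n₁, hn₁mem⟩
  have hNle : N ≤ n₁ := Nat.sInf_le hn₁mem
  obtain ⟨hmN, hNineq⟩ := hNmem
  have hN1 : 1 ≤ N := le_trans (hm ω) hmN
  have hNpos : (0 : ℝ) < N := by exact_mod_cast hN1
  -- N ≥ n₀
  have hAleN : A ≤ (N : ℝ) ^ (1 + δ) := by
    have hpnn : 0 ≤ (N : ℝ) ^ (-δ) := Real.rpow_nonneg hNpos.le _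
    have h1 : A * (N : ℝ) ^ (-δ) ≤ (N : ℝ) := by
      nlinarith [mul_nonneg hApos.le (hv0 N)]
    rw [Real.rpow_neg hNpos.le] at h1
    rw [Real.rpow_add hNpos, Real.rpow_one]
    have hNδpos : 0 < (N : ℝ) ^ δ := Real.rpow_pos_of_pos hNpos δ
    calc A = A * ((N : ℝ) ^ δ)⁻¹ * (N : ℝ) ^ δ := by field_simp
      _ ≤ (N : ℝ) * (N : ℝ) ^ δ := mul_le_mul_of_nonneg_right h1 hNδpos.le
  have hn₀N : n₀ ≤ N := by
    by_contra h
    push_neg at h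
    have hcast : (N : ℝ) < (n₀ : ℝ) := by exact_mod_cast h
    have h2 : (N : ℝ) ^ (1 + δ) < (n₀ : ℝ) ^ (1 + δ) :=
      Real.rpow_lt_rpow hNpos.le hcast (by linarith)
    have h3 : (n₀ : ℝ) ^ (1 + δ) ≤ A := by
      rw [hAdef, le_div_iff₀ hw]; nlinarith
    linarith
  obtain ⟨hvN, hpowN⟩ := hn₀ N hn₀N
  have hC : (0 : ℝ) < a * ξsq / ω ^ 2 := by positivity
  -- lower bound
  have hlow : (1 - ε) * (a * ξsq / ω ^ 2) < (N : ℝ) := by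
    have hpnn : 0 ≤ (N : ℝ) ^ (-δ) := Real.rpow_nonneg hNpos.le _
    have h2 : ξsq - ε₁ ≤ v N + (N : ℝ) ^ (-δ) := by
      have := hvN.1; linarith
    have h3 : A * (ξsq - ε₁) ≤ (N : ℝ) :=
      le_trans (mul_le_mul_of_nonneg_left h2 hApos.le) hNineq
    have key : a * (ξsq - ε₁) ≤ (N : ℝ) * ω ^ 2 := by
      have : a * (ξsq - ε₁) = A * (ξsq - ε₁) * ω ^ 2 := by
        rw [hAdef]; field_simp
      rw [this]
      exact mul_le_mul_of_nonneg_right h3 hw.le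
    rw [mul_div_assoc', div_lt_iff₀ hw]
    nlinarith [mul_pos hξ hε]
  -- upper bound
  have hhigh : (N : ℝ) < (1 + ε) * (a * ξsq / ω ^ 2) := by
    have hceil : (⌈A * (ξsq + 2 * ε₁)⌉₊ : ℝ) < A * (ξsq + 2 * ε₁) + 1 :=
      Nat.ceil_lt_add_one (by positivity)
    have hnat : n₁ ≤ m ω + n₀ + ⌈A * (ξsq + 2 * ε₁)⌉₊ := by
      simp only [hn₁def, max_le_iff]; omega
    have hNreal : (N : ℝ) ≤ (m ω : ℝ) + (n₀ : ℝ) + (⌈A * (ξsq + 2 * ε₁)⌉₊ : ℝ) := by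
      exact_mod_cast le_trans hNle hnat
    have hAw : A * (ξsq + 2 * ε₁) * ω ^ 2 = a * (ξsq + 2 * ε₁) := by
      rw [hAdef]; field_simp
    have haε₁ : a * ε₁ ≤ a * (ξsq * ε / 4) := mul_le_mul_of_nonneg_left hε₁b ha.le
    have e1 : (N : ℝ) * ω ^ 2 <
        ω ^ 2 * (m ω : ℝ) + ω ^ 2 * ((n₀ : ℝ) + 1) + a * (ξsq + 2 * ε₁) := by
      calc (N : ℝ) * ω ^ 2
          ≤ ((m ω : ℝ) + (n₀ : ℝ) + (⌈A * (ξsq + 2 * ε₁)⌉₊ : ℝ)) * ω ^ 2 :=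
            mul_le_mul_of_nonneg_right hNreal hw.le
        _ < ((m ω : ℝ) + (n₀ : ℝ) + (A * (ξsq + 2 * ε₁) + 1)) * ω ^ 2 :=
            mul_lt_mul_of_pos_right (by linarith) hw
        _ = ω ^ 2 * (m ω : ℝ) + ω ^ 2 * ((n₀ : ℝ) + 1) + A * (ξsq + 2 * ε₁) * ω ^ 2 := by
            ring
        _ = ω ^ 2 * (m ω : ℝ) + ω ^ 2 * ((n₀ : ℝ) + 1) + a * (ξsq + 2 * ε₁) := by
            rw [hAw]
    rw [mul_div_assoc', lt_div_iff₀ hw]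
    linarith [e1, hA2, hA3, haε₁]
  rw [Real.dist_eq, abs_sub_lt_iff]
  constructor
  · have h := (div_lt_iff₀ hC).2 hhigh
    linarith
  · have h := (lt_div_iff₀ hC).2 hlow
    linarith

/-- Almost-sure first-order efficiency of the purely sequential procedure:
if `V_n² → ξ²` almost surely, then for `P`-almost every `x`, the stopping
variable `N_ω(x) = inf{ n : n ≥ m(ω), n ≥ (a/ω²)(V_n²(x) + n^{−δ}) }` satisfies
`N_ω(x)/C_ω → 1` as `ω → 0⁺`, where `C_ω = a ξ²/ω²`. -/
theorem purely_sequential_ratio_tendsto_ae {Ω : Type*} [MeasurableSpace Ω]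
    (P : Measure Ω) [IsProbabilityMeasure P]
    (ξsq : ℝ) (hξ : 0 < ξsq)
    (V : ℕ → Ω → ℝ) (hVmeas : ∀ n, Measurable (V n)) (hVnonneg : ∀ n x, 0 ≤ V n x)
    (hVconv : ∀ᵐ x ∂P, Tendsto (fun n => V n x) atTop (𝓝 ξsq))
    (a δ : ℝ) (ha : 0 < a) (hδ : 0 < δ)
    (m : ℝ → ℕ) (hm : ∀ ω, 1 ≤ m ω)
    (hm0 : Tendsto (fun ω : ℝ => ω ^ 2 * (m ω : ℝ)) (𝓝[>] 0) (𝓝 0)) :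
    ∀ᵐ x ∂P, Tendsto
      (fun ω : ℝ => (stopIndex (a / ω ^ 2) δ (m ω) (fun n => V n x) : ℝ) /
        (a * ξsq / ω ^ 2))
      (𝓝[>] 0) (𝓝 1) := by
  filter_upwards [hVconv] with x hx
  exact det_ratio ξsq a δ hξ ha hδ (fun n => V n x) (fun n => hVnonneg n x) hx m hm hm0
end

section
/- Let (Ω, 𝒜, P) be a probability space, ξ² > 0, and let (V_n²)_{n≥1} be measurable functions V_n² : Ω → [0,∞) with V_n² → ξ² almost surely. Let a > 0, and let the pilot size t : (0,∞) → ℕ satisfy t(ω) → ∞ and ω² t(ω) → 0 as ω → 0⁺. For each ω > 0 define the two-stage sample size Q_ω(x) = max{ t(ω), ⌈ (a/ω²) V_{t(ω)}²(x) ⌉ } and C_ω = a ξ² / ω². Then for P-almost every x ∈ Ω, Q_ω(x)/C_ω → 1 as ω → 0⁺. -/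
open MeasureTheory Filter Topology

/-- Almost-sure first-order efficiency of the two-stage procedure: if
`V_n² → ξ²` almost surely, the pilot size `t(ω) → ∞` and `ω² t(ω) → 0` as
`ω → 0⁺`, then for `P`-almost every `x`, the two-stage sample size
`Q_ω(x) = max{ t(ω), ⌈(a/ω²) V_{t(ω)}²(x)⌉ }` satisfies `Q_ω(x)/C_ω → 1`
as `ω → 0⁺`, where `C_ω = a ξ²/ω²`. -/
theorem two_stage_ratio_tendsto_ae {Ω : Type*} [MeasurableSpace Ω]
    (P : Measure Ω) [IsProbabilityMeasure P]
    (ξsq : ℝ) (hξ : 0 < ξsq)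
    (V : ℕ → Ω → ℝ) (hVmeas : ∀ n, Measurable (V n)) (hVnonneg : ∀ n x, 0 ≤ V n x)
    (hVconv : ∀ᵐ x ∂P, Tendsto (fun n => V n x) atTop (𝓝 ξsq))
    (a : ℝ) (ha : 0 < a)
    (t : ℝ → ℕ) (ht : Tendsto t (𝓝[>] 0) atTop)
    (ht0 : Tendsto (fun ω : ℝ => ω ^ 2 * (t ω : ℝ)) (𝓝[>] 0) (𝓝 0)) :
    ∀ᵐ x ∂P, Tendsto
      (fun ω : ℝ => (max (t ω) ⌈(a / ω ^ 2) * V (t ω) x⌉₊ : ℝ) /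
        (a * ξsq / ω ^ 2))
      (𝓝[>] 0) (𝓝 1) := by
  filter_upwards [hVconv] with x hx
  have hVt : Tendsto (fun ω => V (t ω) x) (𝓝[>] 0) (𝓝 ξsq) := hx.comp ht
  have hlow : Tendsto (fun ω => V (t ω) x / ξsq) (𝓝[>] 0) (𝓝 1) := by
    simpa [div_self hξ.ne'] using hVt.div_const ξsq
  have hsq : Tendsto (fun ω : ℝ => ω ^ 2 / (a * ξsq)) (𝓝[>] 0) (𝓝 0) := by
    have h1 : Tendsto (fun ω : ℝ => ω ^ 2) (𝓝[>] 0) (𝓝 0) := by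
      have := (continuous_pow 2).tendsto (0:ℝ)
      simpa using this.mono_left nhdsWithin_le_nhds
    simpa using h1.div_const (a * ξsq)
  have hts : Tendsto (fun ω : ℝ => ω ^ 2 * (t ω : ℝ) / (a * ξsq)) (𝓝[>] 0) (𝓝 0) := by
    simpa using ht0.div_const (a * ξsq)
  have hup : Tendsto (fun ω : ℝ => V (t ω) x / ξsq + ω ^ 2 / (a * ξsq)
      + ω ^ 2 * (t ω : ℝ) / (a * ξsq)) (𝓝[>] 0) (𝓝 1) := by
    simpa using (hlow.add hsq).add hts
  refine tendsto_of_tendsto_of_tendsto_of_le_of_le' hlow hup ?_ ?_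
  · filter_upwards [self_mem_nhdsWithin] with ω hω
    have hω' : (0:ℝ) < ω := hω
    have hC : (0:ℝ) < a * ξsq / ω ^ 2 := by positivity
    rw [div_le_div_iff₀ (by positivity) hC]
    have h1 : (a / ω ^ 2) * V (t ω) x ≤ max ((t ω : ℝ)) ((⌈(a / ω ^ 2) * V (t ω) x⌉₊ : ℕ) : ℝ) := by
      exact (Nat.le_ceil _).trans (le_max_right _ _)
    calc V (t ω) x * (a * ξsq / ω ^ 2) = ((a / ω ^ 2) * V (t ω) x) * ξsq := by
          field_simp
      _ ≤ max ((t ω : ℝ)) ((⌈(a / ω ^ 2) * V (t ω) x⌉₊ : ℕ) : ℝ) * ξsq := by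
          exact mul_le_mul_of_nonneg_right h1 hξ.le
  · filter_upwards [self_mem_nhdsWithin] with ω hω
    have hω' : (0:ℝ) < ω := hω
    have hC : (0:ℝ) < a * ξsq / ω ^ 2 := by positivity
    have hf : (0:ℝ) ≤ (a / ω ^ 2) * V (t ω) x := mul_nonneg (by positivity) (hVnonneg _ _)
    have h2 : max ((t ω : ℝ)) ((⌈(a / ω ^ 2) * V (t ω) x⌉₊ : ℕ) : ℝ)
        ≤ (t ω : ℝ) + ((a / ω ^ 2) * V (t ω) x + 1) := by
      refine max_le (by linarith [hf]) ?_
      have := (Nat.ceil_lt_add_one hf).le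
      linarith [this]
    have heq : ((t ω : ℝ) + ((a / ω ^ 2) * V (t ω) x + 1)) / (a * ξsq / ω ^ 2)
        = V (t ω) x / ξsq + ω ^ 2 / (a * ξsq) + ω ^ 2 * (t ω : ℝ) / (a * ξsq) := by
      field_simp
      ring
    rw [← heq]
    gcongr
end

section
/- Let (Ω, 𝒜, P) be a probability space, ξ² > 0, and let (V_n²)_{n≥1} be measurable functions V_n² : Ω → [0,∞) with E[V_n²] < ∞ for every n and E[V_n²] → ξ² as n → ∞. Let a > 0, and let the pilot size t : (0,∞) → ℕ satisfy t(ω) → ∞ and ω² t(ω) → 0 as ω → 0⁺. For each ω > 0 define Q_ω(x) = max{ t(ω), ⌈ (a/ω²) V_{t(ω)}²(x) ⌉ } and C_ω = a ξ² / ω². Then E[Q_ω]/C_ω → 1 as ω → 0⁺, i.e. ω² E[Q_ω] → a ξ². -/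
open MeasureTheory Filter Topology

/-- Asymptotic first-order efficiency in expectation of the two-stage
procedure: if `E[V_n²] < ∞` for every `n` and `E[V_n²] → ξ²`, the pilot size
`t(ω) → ∞` and `ω² t(ω) → 0` as `ω → 0⁺`, then the two-stage sample size
`Q_ω = max{ t(ω), ⌈(a/ω²) V_{t(ω)}²⌉ }` satisfies `E[Q_ω]/C_ω → 1` as
`ω → 0⁺`, i.e. `ω² E[Q_ω] → a ξ²`, where `C_ω = a ξ²/ω²`. -/
theorem two_stage_expectation_ratio_tendsto {Ω : Type*} [MeasurableSpace Ω]
    (P : Measure Ω) [IsProbabilityMeasure P]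
    (ξsq : ℝ) (hξ : 0 < ξsq)
    (V : ℕ → Ω → ℝ) (hVmeas : ∀ n, Measurable (V n)) (hVnonneg : ∀ n x, 0 ≤ V n x)
    (hVint : ∀ n, Integrable (V n) P)
    (hVmean : Tendsto (fun n => ∫ x, V n x ∂P) atTop (𝓝 ξsq))
    (a : ℝ) (ha : 0 < a)
    (t : ℝ → ℕ) (ht : Tendsto t (𝓝[>] 0) atTop)
    (ht0 : Tendsto (fun ω : ℝ => ω ^ 2 * (t ω : ℝ)) (𝓝[>] 0) (𝓝 0)) :
    Tendsto
      (fun ω : ℝ => ω ^ 2 *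
        ∫ x, (max (t ω) ⌈(a / ω ^ 2) * V (t ω) x⌉₊ : ℝ) ∂P)
      (𝓝[>] 0) (𝓝 (a * ξsq)) := by
  have key : ∀ ω : ℝ, 0 < ω →
      a * ∫ x, V (t ω) x ∂P ≤
        ω ^ 2 * ∫ x, (max (t ω) ⌈(a / ω ^ 2) * V (t ω) x⌉₊ : ℝ) ∂P ∧
      ω ^ 2 * ∫ x, (max (t ω) ⌈(a / ω ^ 2) * V (t ω) x⌉₊ : ℝ) ∂P ≤
        ω ^ 2 * (t ω : ℝ) + a * ∫ x, V (t ω) x ∂P + ω ^ 2 := by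
    intro ω hω
    set n := t ω with hn
    set c : ℝ := a / ω ^ 2 with hc
    have hω2 : (0:ℝ) < ω ^ 2 := by positivity
    have hcpos : 0 < c := by positivity
    have hmeas : Measurable fun x => (max (n : ℝ) (⌈c * V n x⌉₊ : ℝ)) :=
      measurable_const.max
        (measurable_from_nat.comp ((hVmeas n).const_mul c).nat_ceil)
    have hg1 : Integrable (fun x => c * V n x + 1) P :=
      ((hVint n).const_mul c).add (integrable_const 1)
    have hg : Integrable (fun x => (n : ℝ) + (c * V n x + 1)) P :=
      (integrable_const _).add hg1
    have hbound : ∀ x, (max n ⌈c * V n x⌉₊ : ℝ) ≤ (n : ℝ) + (c * V n x + 1) := by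
      intro x
      have h2 : ((⌈c * V n x⌉₊ : ℕ) : ℝ) ≤ c * V n x + 1 :=
        (Nat.ceil_lt_add_one (mul_nonneg hcpos.le (hVnonneg n x))).le
      have hv : 0 ≤ c * V n x := mul_nonneg hcpos.le (hVnonneg n x)
      refine max_le ?_ (by linarith)
      have : (0:ℝ) ≤ c * V n x + 1 := by linarith
      linarith
    have hint : Integrable (fun x => (max n ⌈c * V n x⌉₊ : ℝ)) P := by
      refine hg.mono' hmeas.aestronglyMeasurable (ae_of_all _ fun x => ?_)
      rw [Real.norm_eq_abs,
        abs_of_nonneg (le_trans (Nat.cast_nonneg n) (le_max_left _ _))]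
      exact hbound x
    have hIV := hVint n
    constructor
    · have hle : ∫ x, c * V n x ∂P ≤ ∫ x, (max n ⌈c * V n x⌉₊ : ℝ) ∂P := by
        refine integral_mono (hIV.const_mul c) hint fun x => ?_
        calc c * V n x ≤ (⌈c * V n x⌉₊ : ℝ) := Nat.le_ceil _
          _ ≤ (max n ⌈c * V n x⌉₊ : ℝ) := by exact_mod_cast le_max_right _ _
      rw [integral_const_mul] at hle
      have := mul_le_mul_of_nonneg_left hle hω2.le
      calc a * ∫ x, V n x ∂P = ω ^ 2 * (c * ∫ x, V n x ∂P) := by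
            rw [hc]; field_simp
          _ ≤ _ := this
    · have hle : ∫ x, (max n ⌈c * V n x⌉₊ : ℝ) ∂P ≤
          ∫ x, ((n : ℝ) + (c * V n x + 1)) ∂P :=
        integral_mono hint hg hbound
      have hgint : ∫ x, ((n : ℝ) + (c * V n x + 1)) ∂P =
          (n : ℝ) + (c * ∫ x, V n x ∂P + 1) := by
        rw [integral_add (integrable_const _) hg1,
          integral_add (hIV.const_mul c) (integrable_const 1),
          integral_const, integral_const, integral_const_mul]
        simp
      rw [hgint] at hle
      have := mul_le_mul_of_nonneg_left hle hω2.le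
      calc ω ^ 2 * ∫ x, (max n ⌈c * V n x⌉₊ : ℝ) ∂P
          ≤ ω ^ 2 * ((n : ℝ) + (c * ∫ x, V n x ∂P + 1)) := this
        _ = ω ^ 2 * (n : ℝ) + a * ∫ x, V n x ∂P + ω ^ 2 := by
            rw [hc]; field_simp; ring
  have hlow : Tendsto (fun ω => a * ∫ x, V (t ω) x ∂P) (𝓝[>] (0:ℝ)) (𝓝 (a * ξsq)) :=
    tendsto_const_nhds.mul (hVmean.comp ht)
  have hsq : Tendsto (fun ω : ℝ => ω ^ 2) (𝓝[>] (0:ℝ)) (𝓝 0) := by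
    have : Tendsto (fun ω : ℝ => ω ^ 2) (𝓝 (0:ℝ)) (𝓝 ((0:ℝ) ^ 2)) :=
      (continuous_pow 2).tendsto 0
    simpa using this.mono_left nhdsWithin_le_nhds
  have hup : Tendsto (fun ω : ℝ => ω ^ 2 * (t ω : ℝ) + a * ∫ x, V (t ω) x ∂P + ω ^ 2)
      (𝓝[>] (0:ℝ)) (𝓝 (a * ξsq)) := by
    have := (ht0.add hlow).add hsq
    simpa using this
  refine tendsto_of_tendsto_of_tendsto_of_le_of_le' hlow hup ?_ ?_
  · filter_upwards [self_mem_nhdsWithin] with ω hω using (key ω hω).1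
  · filter_upwards [self_mem_nhdsWithin] with ω hω using (key ω hω).2
end

section
/- Let (Ω, 𝒜, P) be a probability space, G ∈ ℝ, and ξ > 0. Let (G_n)_{n≥1} be real-valued random variables such that Y_n := √n (G_n − G) converges in distribution to N(0, ξ²) and (Y_n) satisfies the uniform continuity in probability (u.c.i.p.) condition. Let (V_n)_{n≥1} be real-valued random variables with V_n → ξ almost surely. Let (n_k)_{k≥1} be positive integers with n_k → ∞ and let (N_k)_{k≥1} be measurable ℕ-valued random variables with N_k/n_k → 1 in probability as k → ∞. Then for every z > 0, P( √(N_k) |G_{N_k} − G| < z V_{N_k} ) → Φ(z) − Φ(−z) as k → ∞, where Φ is the cumulative distribution function of the standard normal law N(0,1); in particular, the coverage probability of the interval ( G_{N_k} − z V_{N_k}/√(N_k), G_{N_k} + z V_{N_k}/√(N_k) ) for G converges to Φ(z) − Φ(−z). -/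
open MeasureTheory ProbabilityTheory Filter Topology

/-- The cumulative distribution function of the standard normal law `N(0,1)`. -/
noncomputable def stdNormalCDF (z : ℝ) : ℝ :=
  ((gaussianReal 0 1) (Set.Iic z)).toReal

/-! ### Auxiliary lemmas -/

/-- Trapezoid test function: equal to `1` on `[-(c-θ), c-θ]`, `0` outside `(-c, c)`. -/
noncomputable def trapFn (c θ : ℝ) : BoundedContinuousFunction ℝ ℝ :=
  BoundedContinuousFunction.mk
    ⟨fun y => max 0 (min 1 ((c - |y|) / θ)), by fun_prop⟩
    ⟨1, by
      intro x y
      simp only [ContinuousMap.coe_mk, Real.dist_eq]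
      have h1 : ∀ t : ℝ, (0:ℝ) ≤ max 0 (min 1 ((c - |t|) / θ)) := fun t => le_max_left _ _
      have h2 : ∀ t : ℝ, max 0 (min 1 ((c - |t|) / θ)) ≤ 1 := fun t =>
        max_le zero_le_one (min_le_left _ _)
      rw [abs_sub_le_iff]
      constructor <;> linarith [h1 x, h2 x, h1 y, h2 y]⟩

lemma trapFn_nonneg (c θ y : ℝ) : 0 ≤ trapFn c θ y := le_max_left _ _

lemma trapFn_le_one (c θ y : ℝ) : trapFn c θ y ≤ 1 :=
  max_le zero_le_one (min_le_left _ _)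

lemma trapFn_eq_one {c θ y : ℝ} (hθ : 0 < θ) (h : |y| ≤ c - θ) : trapFn c θ y = 1 := by
  have : (1:ℝ) ≤ (c - |y|) / θ := (le_div_iff₀ hθ).2 (by linarith)
  show max 0 (min 1 ((c - |y|) / θ)) = 1
  rw [min_eq_left this, max_eq_right zero_le_one]

lemma trapFn_eq_zero {c θ y : ℝ} (hθ : 0 < θ) (h : c ≤ |y|) : trapFn c θ y = 0 := by
  have : (c - |y|) / θ ≤ 0 := div_nonpos_of_nonpos_of_nonneg (by linarith) hθ.le
  show max 0 (min 1 ((c - |y|) / θ)) = 0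
  rw [max_eq_left (le_trans (min_le_right _ _) this)]

lemma integrable_trapFn_comp {Ω : Type*} [MeasurableSpace Ω] (P : Measure Ω)
    [IsProbabilityMeasure P] {T : Ω → ℝ} (hT : Measurable T) (c θ : ℝ) :
    Integrable (fun x => trapFn c θ (T x)) P := by
  refine Integrable.mono' (integrable_const 1) ?_ ?_
  · exact ((trapFn c θ).continuous.measurable.comp hT).aestronglyMeasurable
  · refine Eventually.of_forall fun x => ?_
    rw [Real.norm_eq_abs, abs_of_nonneg (trapFn_nonneg _ _ _)]
    exact trapFn_le_one _ _ _

lemma meas_le_integral_trapFn {Ω : Type*} [MeasurableSpace Ω] (P : Measure Ω)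
    [IsProbabilityMeasure P] {T : Ω → ℝ} (hT : Measurable T) {b c θ : ℝ}
    (hθ : 0 < θ) (hb : b + θ ≤ c) :
    (P {x | |T x| ≤ b}).toReal ≤ ∫ x, trapFn c θ (T x) ∂P := by
  have hS : MeasurableSet {x | |T x| ≤ b} := measurableSet_le hT.abs measurable_const
  have h1 : ∫ x, Set.indicator {x | |T x| ≤ b} (fun _ => (1:ℝ)) x ∂P
      = (P {x | |T x| ≤ b}).toReal := by
    rw [integral_indicator_const (1:ℝ) hS, smul_eq_mul, mul_one, measureReal_def]
  rw [← h1]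
  refine integral_mono ((integrable_const (1:ℝ)).indicator hS)
    (integrable_trapFn_comp P hT c θ) fun x => ?_
  by_cases hx : |T x| ≤ b
  · rw [Set.indicator_of_mem (show x ∈ {x | |T x| ≤ b} from hx) (fun _ => (1:ℝ)),
      trapFn_eq_one hθ (by linarith)]
  · rw [Set.indicator_of_notMem (show x ∉ {x | |T x| ≤ b} from hx) (fun _ => (1:ℝ))]
    exact trapFn_nonneg _ _ _

lemma integral_trapFn_le_meas {Ω : Type*} [MeasurableSpace Ω] (P : Measure Ω)
    [IsProbabilityMeasure P] {T : Ω → ℝ} (hT : Measurable T) {b c θ : ℝ}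
    (hθ : 0 < θ) (hc : c ≤ b) :
    ∫ x, trapFn c θ (T x) ∂P ≤ (P {x | |T x| < b}).toReal := by
  have hS : MeasurableSet {x | |T x| < b} := measurableSet_lt hT.abs measurable_const
  have h1 : ∫ x, Set.indicator {x | |T x| < b} (fun _ => (1:ℝ)) x ∂P
      = (P {x | |T x| < b}).toReal := by
    rw [integral_indicator_const (1:ℝ) hS, smul_eq_mul, mul_one, measureReal_def]
  rw [← h1]
  refine integral_mono (integrable_trapFn_comp P hT c θ)
    ((integrable_const (1:ℝ)).indicator hS) fun x => ?_
  by_cases hx : |T x| < b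
  · rw [Set.indicator_of_mem (show x ∈ {x | |T x| < b} from hx) (fun _ => (1:ℝ))]
    exact trapFn_le_one _ _ _
  · rw [Set.indicator_of_notMem (show x ∉ {x | |T x| < b} from hx) (fun _ => (1:ℝ)),
      trapFn_eq_zero hθ (le_trans hc (not_lt.1 hx))]

lemma gaussian_noAtoms {v : NNReal} (hv : v ≠ 0) (μ : ℝ) : NullSingletonClass (gaussianReal μ v) :=
  ⟨fun _ => (gaussianReal_absolutelyContinuous μ hv) Real.volume_singleton⟩

lemma std_Ioo_eq (z : ℝ) (hz : 0 < z) :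
    ((gaussianReal 0 1) (Set.Ioo (-z) z)).toReal = stdNormalCDF z - stdNormalCDF (-z) := by
  haveI := gaussian_noAtoms (one_ne_zero) (0 : ℝ)
  have h1 : (gaussianReal 0 1) (Set.Ioo (-z) z) = (gaussianReal 0 1) (Set.Ioc (-z) z) :=
    measure_congr (MeasureTheory.Ioo_ae_eq_Ioc)
  have h2 : Set.Iic (-z) ∪ Set.Ioc (-z) z = Set.Iic z :=
    Set.Iic_union_Ioc_eq_Iic (by linarith)
  have h3 : (gaussianReal 0 1) (Set.Iic z)
      = (gaussianReal 0 1) (Set.Iic (-z)) + (gaussianReal 0 1) (Set.Ioc (-z) z) := by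
    rw [← h2, measure_union (Set.Iic_disjoint_Ioc le_rfl) measurableSet_Ioc]
  have hfin : ∀ s : Set ℝ, (gaussianReal 0 1) s ≠ ⊤ := fun s => measure_ne_top _ s
  rw [h1, stdNormalCDF, stdNormalCDF, h3, ENNReal.toReal_add (hfin _) (hfin _)]
  ring

lemma gauss_scale (ξ z : ℝ) (hξ : 0 < ξ) :
    (gaussianReal 0 ⟨ξ ^ 2, sq_nonneg ξ⟩) (Set.Ioo (-(z * ξ)) (z * ξ))
      = (gaussianReal 0 1) (Set.Ioo (-z) z) := by
  have hmap : (gaussianReal 0 1).map (ξ * ·)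
      = gaussianReal 0 ⟨ξ ^ 2, sq_nonneg ξ⟩ := by
    rw [gaussianReal_map_const_mul ξ]
    congr 1
    · ring
    · ext; simp; rfl
  rw [← hmap, Measure.map_apply (measurable_const_mul ξ) measurableSet_Ioo]
  congr 1
  ext y
  simp only [Set.mem_preimage, Set.mem_Ioo]
  constructor
  · rintro ⟨h1, h2⟩
    exact ⟨by nlinarith, by nlinarith⟩
  · rintro ⟨h1, h2⟩
    exact ⟨by nlinarith, by nlinarith⟩

lemma exists_upper_delta (ν : Measure ℝ) [IsProbabilityMeasure ν] [NullSingletonClass ν]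
    {c η : ℝ} (hη : 0 < η) :
    ∃ δ : ℝ, 0 < δ ∧
      (ν (Set.Ioo (-(c + 3 * δ)) (c + 3 * δ))).toReal ≤ (ν (Set.Ioo (-c) c)).toReal + η := by
  set s : ℕ → Set ℝ := fun j => Set.Icc (-(c + 1 / (j + 1))) (c + 1 / (j + 1)) with hs
  have hanti : Antitone s := by
    intro i j hij
    have h1 : (1:ℝ) / (j + 1) ≤ 1 / (i + 1) := by
      apply one_div_le_one_div_of_le (by positivity)
      exact_mod_cast by omega
    exact Set.Icc_subset_Icc (by linarith) (by linarith)
  have hInter : ⋂ j, s j = Set.Icc (-c) c := by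
    ext x
    simp only [Set.mem_iInter, hs, Set.mem_Icc]
    constructor
    · intro h
      constructor
      · by_contra hx
        push_neg at hx
        obtain ⟨j, hj⟩ := exists_nat_one_div_lt (show (0:ℝ) < -c - x by linarith)
        linarith [(h j).1]
      · by_contra hx
        push_neg at hx
        obtain ⟨j, hj⟩ := exists_nat_one_div_lt (show (0:ℝ) < x - c by linarith)
        linarith [(h j).2]
    · intro ⟨h1, h2⟩ j
      have : (0:ℝ) < 1 / (j + 1) := by positivity
      exact ⟨by linarith, by linarith⟩
  have htend : Tendsto (fun j => ν (s j)) atTop (𝓝 (ν (Set.Icc (-c) c))) := by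
    rw [← hInter]
    exact tendsto_measure_iInter_atTop
      (fun j => (measurableSet_Icc).nullMeasurableSet) hanti ⟨0, measure_ne_top _ _⟩
  have htendR : Tendsto (fun j => (ν (s j)).toReal) atTop
      (𝓝 ((ν (Set.Icc (-c) c)).toReal)) :=
    (ENNReal.tendsto_toReal (measure_ne_top _ _)).comp htend
  have hIccIoo : (ν (Set.Icc (-c) c)).toReal = (ν (Set.Ioo (-c) c)).toReal := by
    rw [measure_congr (MeasureTheory.Ioo_ae_eq_Icc)]
  rw [hIccIoo] at htendR
  obtain ⟨j, hj⟩ := (htendR.eventually_lt_const (by linarith :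
    (ν (Set.Ioo (-c) c)).toReal < (ν (Set.Ioo (-c) c)).toReal + η)).exists
  refine ⟨1 / (3 * (j + 1)), by positivity, ?_⟩
  have h3 : 3 * ((1:ℝ) / (3 * (j + 1))) = 1 / (j + 1) := by field_simp
  rw [h3]
  refine le_trans ?_ hj.le
  exact ENNReal.toReal_mono (measure_ne_top _ _) (measure_mono Set.Ioo_subset_Icc_self)

lemma exists_lower_delta (ν : Measure ℝ) [IsProbabilityMeasure ν]
    {c η : ℝ} (hc : 0 < c) (hη : 0 < η) :
    ∃ δ : ℝ, 0 < δ ∧ 3 * δ < c ∧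
      (ν (Set.Ioo (-c) c)).toReal
        ≤ (ν (Set.Icc (-(c - 3 * δ)) (c - 3 * δ))).toReal + η := by
  set s : ℕ → Set ℝ := fun j => Set.Icc (-(c - 1 / (j + 1))) (c - 1 / (j + 1)) with hs
  have hmono : Monotone s := by
    intro i j hij
    have h1 : (1:ℝ) / (j + 1) ≤ 1 / (i + 1) := by
      apply one_div_le_one_div_of_le (by positivity)
      exact_mod_cast by omega
    exact Set.Icc_subset_Icc (by linarith) (by linarith)
  have hUnion : ⋃ j, s j = Set.Ioo (-c) c := by
    ext x
    simp only [Set.mem_iUnion, hs, Set.mem_Icc, Set.mem_Ioo]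
    constructor
    · rintro ⟨j, h1, h2⟩
      have : (0:ℝ) < 1 / (j + 1) := by positivity
      exact ⟨by linarith, by linarith⟩
    · rintro ⟨h1, h2⟩
      obtain ⟨j, hj⟩ := exists_nat_one_div_lt (show (0:ℝ) < min (x + c) (c - x) by
        simp only [lt_min_iff]; exact ⟨by linarith, by linarith⟩)
      have h := lt_min_iff.1 hj
      exact ⟨j, by linarith [h.1], by linarith [h.2]⟩
  have htend : Tendsto (fun j => ν (s j)) atTop (𝓝 (ν (Set.Ioo (-c) c))) := by
    rw [← hUnion]
    exact tendsto_measure_iUnion_atTop hmono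
  have htendR : Tendsto (fun j => (ν (s j)).toReal) atTop
      (𝓝 ((ν (Set.Ioo (-c) c)).toReal)) :=
    (ENNReal.tendsto_toReal (measure_ne_top _ _)).comp htend
  have hev1 : ∀ᶠ j in atTop, (ν (Set.Ioo (-c) c)).toReal - η < (ν (s j)).toReal :=
    htendR.eventually_const_lt (by linarith)
  have hev2 : ∀ᶠ j : ℕ in atTop, 1 / ((j:ℝ) + 1) < c :=
    tendsto_one_div_add_atTop_nhds_zero_nat.eventually_lt_const hc
  obtain ⟨j, hj1, hj2⟩ := (hev1.and hev2).exists
  have h3 : 3 * ((1:ℝ) / (3 * (j + 1))) = 1 / (j + 1) := by field_simp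
  exact ⟨1 / (3 * (j + 1)), by positivity, by rw [h3]; exact hj2,
    by rw [h3]; linarith [hj1]⟩

/-- Asymptotic consistency of the sequential confidence interval: if
`Y_n = √n (G_n − G)` converges in distribution to `N(0, ξ²)` and satisfies the
u.c.i.p. condition, `V_n → ξ` almost surely, and `N_k / n_k → 1` in probability
with `n_k → ∞`, then for every `z > 0`, the coverage probability
`P( √N_k |G_{N_k} − G| < z V_{N_k} )` of the interval
`(G_{N_k} − z V_{N_k}/√N_k, G_{N_k} + z V_{N_k}/√N_k)` converges to
`Φ(z) − Φ(−z)`. -/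
theorem sequential_coverage_probability {Ω : Type*} [MeasurableSpace Ω]
    (P : Measure Ω) [IsProbabilityMeasure P]
    (G : ℝ) (ξ : ℝ) (hξ : 0 < ξ)
    (Gn : ℕ → Ω → ℝ) (hGmeas : ∀ n, Measurable (Gn n))
    (hUCIP : UCIP P (fun n x => Real.sqrt n * (Gn n x - G)))
    (hconv : ∀ f : BoundedContinuousFunction ℝ ℝ,
      Tendsto (fun n : ℕ => ∫ x, f (Real.sqrt n * (Gn n x - G)) ∂P) atTop
        (𝓝 (∫ y, f y ∂(gaussianReal 0 ⟨ξ ^ 2, by positivity⟩))))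
    (V : ℕ → Ω → ℝ) (hVmeas : ∀ n, Measurable (V n))
    (hV : ∀ᵐ x ∂P, Tendsto (fun n => V n x) atTop (𝓝 ξ))
    (n : ℕ → ℕ) (hpos : ∀ k, 0 < n k) (hn : Tendsto n atTop atTop)
    (N : ℕ → Ω → ℕ) (hNmeas : ∀ k, Measurable (N k))
    (hN : ∀ ε : ℝ, 0 < ε →
      Tendsto (fun k => P {x | ε ≤ |(N k x : ℝ) / (n k : ℝ) - 1|}) atTop (𝓝 0)) :
    ∀ z : ℝ, 0 < z →
      Tendsto (fun k =>
          (P {x | Real.sqrt (N k x) * |Gn (N k x) x - G| < z * V (N k x) x}).toReal)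
        atTop (𝓝 (stdNormalCDF z - stdNormalCDF (-z))) := by
  classical
  intro z hz
  set Y : ℕ → Ω → ℝ := fun n x => Real.sqrt n * (Gn n x - G) with hY
  have hYmeas : ∀ m, Measurable (Y m) := fun m =>
    measurable_const.mul ((hGmeas m).sub measurable_const)
  -- Step 1: Y (N k) - Y (n k) → 0 in probability
  have hYdiff : ∀ ε : ℝ, 0 < ε →
      Tendsto (fun k => P {x | ε ≤ |Y (N k x) x - Y (n k) x|}) atTop (𝓝 0) := by
    intro ε hε
    rw [ENNReal.tendsto_atTop_zero]
    intro δ hδ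
    by_cases hδtop : δ = ⊤
    · exact ⟨0, fun k _ => hδtop ▸ le_top⟩
    have hδR : 0 < δ.toReal := ENNReal.toReal_pos (ne_of_gt hδ) hδtop
    set ε' : ℝ := min ε (δ.toReal / 4) with hε'
    have hε'pos : 0 < ε' := lt_min hε (by linarith)
    obtain ⟨ν₀, hν₀, n₀, hUC⟩ := hUCIP ε' hε'pos
    have hev1 : ∀ᶠ k in atTop, n₀ ≤ n k := hn.eventually (eventually_ge_atTop n₀)
    have hev2 : ∀ᶠ k in atTop,
        P {x | ν₀ ≤ |(N k x : ℝ) / (n k : ℝ) - 1|} < ENNReal.ofReal ε' :=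
      (hN ν₀ hν₀.1).eventually_lt_const (by simp [hε'pos])
    rw [eventually_atTop] at hev1 hev2
    obtain ⟨K₁, hK₁⟩ := hev1
    obtain ⟨K₂, hK₂⟩ := hev2
    refine ⟨max K₁ K₂, fun k hk => ?_⟩
    have hk1 := hK₁ k (le_trans (le_max_left _ _) hk)
    have hk2 := hK₂ k (le_trans (le_max_right _ _) hk)
    have hnk : (0:ℝ) < n k := Nat.cast_pos.2 (hpos k)
    have hsub : {x | ε ≤ |Y (N k x) x - Y (n k) x|}
        ⊆ {x | ν₀ ≤ |(N k x : ℝ) / (n k : ℝ) - 1|}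
          ∪ {x | ∃ n' : ℕ, |(n' : ℝ) - ((n k : ℕ) : ℝ)| ≤ ν₀ * (n k) ∧
              ε' ≤ |Y n' x - Y (n k) x|} := by
      intro x hx
      by_cases hA : ν₀ ≤ |(N k x : ℝ) / (n k : ℝ) - 1|
      · exact Or.inl hA
      · right
        push_neg at hA
        refine ⟨N k x, ?_, le_trans (min_le_left _ _) hx⟩
        have hid : ((N k x : ℝ) / (n k) - 1) * (n k) = (N k x : ℝ) - (n k) := by
          field_simp
        calc |(N k x : ℝ) - ((n k : ℕ) : ℝ)|
            = |((N k x : ℝ) / (n k) - 1) * (n k)| := by rw [hid]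
          _ = |(N k x : ℝ) / (n k) - 1| * (n k) := by
              rw [abs_mul, abs_of_pos hnk]
          _ ≤ ν₀ * (n k) := mul_le_mul_of_nonneg_right hA.le hnk.le
    calc P {x | ε ≤ |Y (N k x) x - Y (n k) x|}
        ≤ P ({x | ν₀ ≤ |(N k x : ℝ) / (n k : ℝ) - 1|}
            ∪ {x | ∃ n' : ℕ, |(n' : ℝ) - ((n k : ℕ) : ℝ)| ≤ ν₀ * (n k) ∧
                ε' ≤ |Y n' x - Y (n k) x|}) := measure_mono hsub
      _ ≤ P {x | ν₀ ≤ |(N k x : ℝ) / (n k : ℝ) - 1|}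
          + P {x | ∃ n' : ℕ, |(n' : ℝ) - ((n k : ℕ) : ℝ)| ≤ ν₀ * (n k) ∧
              ε' ≤ |Y n' x - Y (n k) x|} := measure_union_le _ _
      _ ≤ ENNReal.ofReal ε' + ENNReal.ofReal ε' := by
          exact add_le_add hk2.le (hUC (n k) hk1).le
      _ = ENNReal.ofReal (ε' + ε') := (ENNReal.ofReal_add hε'pos.le hε'pos.le).symm
      _ ≤ δ := by
          apply ENNReal.ofReal_le_of_le_toReal
          have : ε' ≤ δ.toReal / 4 := min_le_right _ _
          linarith
  -- Step 2: V (N k) → ξ in probability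
  have hVdiff : ∀ ε : ℝ, 0 < ε →
      Tendsto (fun k => P {x | ε ≤ |V (N k x) x - ξ|}) atTop (𝓝 0) := by
    intro ε hε
    rw [ENNReal.tendsto_atTop_zero]
    intro δ hδ
    set A : ℕ → Set Ω := fun m => {x | ∀ i, m ≤ i → |V i x - ξ| < ε} with hA
    have hAmeas : ∀ m, MeasurableSet (A m) := by
      intro m
      have : A m = ⋂ i, ⋂ (_ : m ≤ i), {x | |V i x - ξ| < ε} := by
        ext x; simp [hA]
      rw [this]
      exact MeasurableSet.iInter fun i => MeasurableSet.iInter fun _ =>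
        measurableSet_lt ((hVmeas i).sub measurable_const).abs measurable_const
    have hAmono : Monotone A := fun i j hij x hx l hl => hx l (le_trans hij hl)
    have hInterNull : P (⋂ m, (A m)ᶜ) = 0 := by
      refine measure_mono_null ?_ (ae_iff.1 hV)
      intro x hx
      simp only [Set.mem_iInter, Set.mem_compl_iff, hA, Set.mem_setOf_eq, not_forall] at hx
      simp only [Set.mem_setOf_eq]
      intro htend
      obtain ⟨M, hM⟩ := Metric.tendsto_atTop.1 htend ε hε
      obtain ⟨i, hi, hiv⟩ := hx M
      exact hiv (by rw [← Real.dist_eq]; exact hM i hi)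
    have htendA : Tendsto (fun m => P (A m)ᶜ) atTop (𝓝 0) := by
      rw [← hInterNull]
      exact tendsto_measure_iInter_atTop
        (fun m => (hAmeas m).compl.nullMeasurableSet)
        (fun i j hij => Set.compl_subset_compl.2 (hAmono hij)) ⟨0, measure_ne_top _ _⟩
    have hδ2 : (0:ENNReal) < δ / 2 := ENNReal.half_pos (ne_of_gt hδ)
    obtain ⟨m, hm⟩ := (htendA.eventually_lt_const hδ2).exists
    have hev2 : ∀ᶠ k in atTop, P {x | (1:ℝ)/2 ≤ |(N k x : ℝ) / (n k : ℝ) - 1|} < δ/2 :=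
      (hN (1/2) (by norm_num)).eventually_lt_const hδ2
    have hev3 : ∀ᶠ k in atTop, 2 * m ≤ n k := hn.eventually (eventually_ge_atTop (2*m))
    rw [eventually_atTop] at hev2 hev3
    obtain ⟨K₂, hK₂⟩ := hev2
    obtain ⟨K₃, hK₃⟩ := hev3
    refine ⟨max K₂ K₃, fun k hk => ?_⟩
    have hk2 := hK₂ k (le_trans (le_max_left _ _) hk)
    have hk3 := hK₃ k (le_trans (le_max_right _ _) hk)
    have hnk : (0:ℝ) < n k := Nat.cast_pos.2 (hpos k)
    have hsub : {x | ε ≤ |V (N k x) x - ξ|}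
        ⊆ (A m)ᶜ ∪ {x | (1:ℝ)/2 ≤ |(N k x : ℝ) / (n k : ℝ) - 1|} := by
      intro x hx
      by_cases hxA : x ∈ A m
      · right
        have hNlt : N k x < m := by
          by_contra hge
          push_neg at hge
          exact absurd hx (not_le.2 (hxA _ hge))
        have hmpos : 0 < m := Nat.pos_of_ne_zero (by rintro rfl; omega)
        have h1 : (N k x : ℝ) / (n k) < 1/2 := by
          rw [div_lt_iff₀ hnk]
          have h2 : (N k x : ℝ) ≤ (m:ℝ) - 1 := by
            have h : N k x + 1 ≤ m := hNlt
            have := (Nat.cast_le (α := ℝ)).2 h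
            push_cast at this
            linarith
          have h3 : (2:ℝ) * m ≤ n k := by exact_mod_cast hk3
          nlinarith
        simp only [Set.mem_setOf_eq]
        rw [abs_sub_comm, abs_of_nonneg (by linarith)]
        linarith
      · exact Or.inl hxA
    calc P {x | ε ≤ |V (N k x) x - ξ|}
        ≤ P ((A m)ᶜ ∪ {x | (1:ℝ)/2 ≤ |(N k x : ℝ) / (n k : ℝ) - 1|}) :=
          measure_mono hsub
      _ ≤ P (A m)ᶜ + P {x | (1:ℝ)/2 ≤ |(N k x : ℝ) / (n k : ℝ) - 1|} :=
          measure_union_le _ _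
      _ ≤ δ/2 + δ/2 := add_le_add hm.le hk2.le
      _ = δ := ENNReal.add_halves δ
  -- the limiting Gaussian measure
  set νg : Measure ℝ := gaussianReal 0 ⟨ξ ^ 2, sq_nonneg ξ⟩ with hνg
  haveI : IsProbabilityMeasure νg := by
    rw [hνg]; exact instIsProbabilityMeasureGaussianReal _ _
  haveI : NullSingletonClass νg := by
    refine gaussian_noAtoms ?_ 0
    intro h
    have : ξ ^ 2 = 0 := congrArg Subtype.val h
    nlinarith
  set c : ℝ := z * ξ with hcdef
  have hcpos : 0 < c := mul_pos hz hξ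
  have hLval : stdNormalCDF z - stdNormalCDF (-z) = (νg (Set.Ioo (-c) c)).toReal := by
    rw [← std_Ioo_eq z hz, ← gauss_scale ξ z hξ]
  -- rewrite the goal event
  have habs : ∀ (m : ℕ) (x : Ω), Real.sqrt (m:ℝ) * |Gn m x - G| = |Y m x| := by
    intro m x
    rw [hY]
    simp only
    rw [abs_mul, abs_of_nonneg (Real.sqrt_nonneg _)]
  have hset : ∀ k, {x | Real.sqrt (N k x) * |Gn (N k x) x - G| < z * V (N k x) x}
      = {x | |Y (N k x) x| < z * V (N k x) x} := by
    intro k; ext x; simp only [Set.mem_setOf_eq, habs]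
  simp only [hset, hLval]
  -- main ε-argument
  rw [Metric.tendsto_atTop]
  intro η hη
  set Lν : ℝ := (νg (Set.Ioo (-c) c)).toReal with hLν
  obtain ⟨δ₁, hδ₁, hU⟩ := exists_upper_delta νg (show (0:ℝ) < η/8 by linarith)
    (c := c)
  obtain ⟨δ₂, hδ₂, hδ₂c, hLo⟩ := exists_lower_delta νg hcpos
    (show (0:ℝ) < η/8 by linarith)
  set δ : ℝ := min δ₁ δ₂ with hδdef
  have hδpos : 0 < δ := lt_min hδ₁ hδ₂
  have hδle₁ : δ ≤ δ₁ := min_le_left _ _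
  have hδle₂ : δ ≤ δ₂ := min_le_right _ _
  have h3δc : 3 * δ < c := by linarith
  -- upper gaussian bound
  have hUpper : (νg (Set.Ioo (-(c + 3 * δ)) (c + 3 * δ))).toReal ≤ Lν + η/8 := by
    refine le_trans ?_ hU
    exact ENNReal.toReal_mono (measure_ne_top _ _)
      (measure_mono (Set.Ioo_subset_Ioo (by linarith) (by linarith)))
  have hLower : Lν ≤ (νg (Set.Icc (-(c - 3 * δ)) (c - 3 * δ))).toReal + η/8 := by
    refine le_trans hLo ?_
    have : (νg (Set.Icc (-(c - 3 * δ₂)) (c - 3 * δ₂))).toReal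
        ≤ (νg (Set.Icc (-(c - 3 * δ)) (c - 3 * δ))).toReal :=
      ENNReal.toReal_mono (measure_ne_top _ _)
        (measure_mono (Set.Icc_subset_Icc (by linarith) (by linarith)))
    linarith
  -- integral bounds against the Gaussian
  have hIplus : ∫ y, trapFn (c + 3*δ) δ y ∂νg ≤ Lν + η/8 := by
    have h1 : ∫ y, trapFn (c + 3*δ) δ y ∂νg ≤ (νg {y : ℝ | |id y| < c + 3*δ}).toReal :=
      integral_trapFn_le_meas νg measurable_id hδpos (le_refl _)
    have h2 : {y : ℝ | |id y| < c + 3*δ} = Set.Ioo (-(c + 3*δ)) (c + 3*δ) := by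
      ext y; simp [abs_lt]
    rw [h2] at h1
    linarith [hUpper]
  have hIminus : Lν - η/8 ≤ ∫ y, trapFn (c - 2*δ) δ y ∂νg := by
    have h1 : (νg {y : ℝ | |id y| ≤ c - 3*δ}).toReal
        ≤ ∫ y, trapFn (c - 2*δ) δ y ∂νg :=
      meas_le_integral_trapFn νg measurable_id hδpos (by linarith)
    have h2 : {y : ℝ | |id y| ≤ c - 3*δ} = Set.Icc (-(c - 3*δ)) (c - 3*δ) := by
      ext y; simp [abs_le, Set.mem_Icc]
    rw [h2] at h1
    linarith
  -- eventual integral convergence along n k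
  have hconvU : Tendsto (fun k => ∫ x, trapFn (c + 3*δ) δ (Y (n k) x) ∂P) atTop
      (𝓝 (∫ y, trapFn (c + 3*δ) δ y ∂νg)) := (hconv (trapFn (c + 3*δ) δ)).comp hn
  have hconvL : Tendsto (fun k => ∫ x, trapFn (c - 2*δ) δ (Y (n k) x) ∂P) atTop
      (𝓝 (∫ y, trapFn (c - 2*δ) δ y ∂νg)) := (hconv (trapFn (c - 2*δ) δ)).comp hn
  have hevU : ∀ᶠ k in atTop, ∫ x, trapFn (c + 3*δ) δ (Y (n k) x) ∂P
      < (∫ y, trapFn (c + 3*δ) δ y ∂νg) + η/8 :=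
    hconvU.eventually_lt_const (by linarith)
  have hevL : ∀ᶠ k in atTop, (∫ y, trapFn (c - 2*δ) δ y ∂νg) - η/8
      < ∫ x, trapFn (c - 2*δ) δ (Y (n k) x) ∂P :=
    hconvL.eventually_const_lt (by linarith)
  -- eventual bad-set bounds
  have hevB1 : ∀ᶠ k in atTop,
      P {x | δ ≤ |Y (N k x) x - Y (n k) x|} < ENNReal.ofReal (η/16) :=
    (hYdiff δ hδpos).eventually_lt_const (by simp; linarith)
  have hevB2 : ∀ᶠ k in atTop,
      P {x | δ/z ≤ |V (N k x) x - ξ|} < ENNReal.ofReal (η/16) :=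
    (hVdiff (δ/z) (by positivity)).eventually_lt_const (by simp; linarith)
  -- combine all eventual statements
  have hall := ((hevU.and hevL).and (hevB1.and hevB2))
  rw [eventually_atTop] at hall
  obtain ⟨K, hK⟩ := hall
  refine ⟨K, fun k hk => ?_⟩
  obtain ⟨⟨hkU, hkL⟩, hkB1, hkB2⟩ := hK k hk
  -- notation for the bad set
  set Bad : Set Ω := {x | δ ≤ |Y (N k x) x - Y (n k) x|}
    ∪ {x | δ/z ≤ |V (N k x) x - ξ|} with hBad
  have hPBad : (P Bad).toReal ≤ η/8 := by
    have h1 : P Bad ≤ ENNReal.ofReal (η/16) + ENNReal.ofReal (η/16) :=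
      le_trans (measure_union_le _ _) (add_le_add hkB1.le hkB2.le)
    rw [← ENNReal.ofReal_add (by linarith) (by linarith)] at h1
    have := ENNReal.toReal_le_of_le_ofReal (by linarith) h1
    linarith
  set E : Set Ω := {x | |Y (N k x) x| < z * V (N k x) x} with hE
  -- upper bound on P E
  have hsub1 : E ⊆ Bad ∪ {x | |Y (n k) x| ≤ c + 2*δ} := by
    intro x hx
    by_cases hxB : x ∈ Bad
    · exact Or.inl hxB
    · right
      simp only [hBad, Set.mem_union, Set.mem_setOf_eq, not_or, not_le] at hxB
      obtain ⟨hB1, hB2⟩ := hxB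
      have hVx : z * V (N k x) x < c + δ := by
        have : V (N k x) x < ξ + δ/z := by
          have := abs_lt.1 hB2
          linarith [this.2]
        calc z * V (N k x) x < z * (ξ + δ/z) := by
              exact mul_lt_mul_of_pos_left this hz
          _ = c + δ := by field_simp; ring
      have hYx : |Y (N k x) x| < c + δ := lt_trans hx hVx
      have : |Y (n k) x| ≤ |Y (N k x) x| + |Y (N k x) x - Y (n k) x| := by
        have := abs_sub_abs_le_abs_sub (Y (n k) x) (Y (N k x) x)
        rw [abs_sub_comm] at this
        linarith [abs_sub_abs_le_abs_sub (Y (n k) x) (Y (N k x) x),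
          abs_sub_comm (Y (N k x) x) (Y (n k) x)]
      simp only [Set.mem_setOf_eq]
      linarith
  have hsub2 : {x | |Y (n k) x| < c - 2*δ} ⊆ Bad ∪ E := by
    intro x hx
    by_cases hxB : x ∈ Bad
    · exact Or.inl hxB
    · right
      simp only [hBad, Set.mem_union, Set.mem_setOf_eq, not_or, not_le] at hxB
      obtain ⟨hB1, hB2⟩ := hxB
      simp only [Set.mem_setOf_eq] at hx
      have hYN : |Y (N k x) x| < c - δ := by
        have h1 : |Y (N k x) x| ≤ |Y (n k) x| + |Y (N k x) x - Y (n k) x| := by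
          have := abs_sub_abs_le_abs_sub (Y (N k x) x) (Y (n k) x)
          linarith
        linarith
      have hVx : c - δ ≤ z * V (N k x) x := by
        have : ξ - δ/z < V (N k x) x := by
          have := abs_lt.1 hB2
          linarith [this.1]
        have h2 : z * (ξ - δ/z) ≤ z * V (N k x) x :=
          mul_le_mul_of_nonneg_left this.le hz.le
        have h3 : z * (ξ - δ/z) = c - δ := by field_simp; ring
        linarith
      exact lt_of_lt_of_le hYN hVx
  -- convert to real inequalities
  have hPE_upper : (P E).toReal ≤ (P Bad).toReal
      + (P {x | |Y (n k) x| ≤ c + 2*δ}).toReal := by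
    have h1 : P E ≤ P Bad + P {x | |Y (n k) x| ≤ c + 2*δ} :=
      le_trans (measure_mono hsub1) (measure_union_le _ _)
    have h2 := ENNReal.toReal_mono
      (by exact ENNReal.add_ne_top.2 ⟨measure_ne_top _ _, measure_ne_top _ _⟩) h1
    rwa [ENNReal.toReal_add (measure_ne_top _ _) (measure_ne_top _ _)] at h2
  have hPE_lower : (P {x | |Y (n k) x| < c - 2*δ}).toReal
      ≤ (P Bad).toReal + (P E).toReal := by
    have h1 : P {x | |Y (n k) x| < c - 2*δ} ≤ P Bad + P E :=
      le_trans (measure_mono hsub2) (measure_union_le _ _)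
    have h2 := ENNReal.toReal_mono
      (by exact ENNReal.add_ne_top.2 ⟨measure_ne_top _ _, measure_ne_top _ _⟩) h1
    rwa [ENNReal.toReal_add (measure_ne_top _ _) (measure_ne_top _ _)] at h2
  -- trapezoid bounds for Y (n k)
  have htrapU : (P {x | |Y (n k) x| ≤ c + 2*δ}).toReal
      ≤ ∫ x, trapFn (c + 3*δ) δ (Y (n k) x) ∂P :=
    meas_le_integral_trapFn P (hYmeas (n k)) hδpos (by linarith)
  have htrapL : ∫ x, trapFn (c - 2*δ) δ (Y (n k) x) ∂P
      ≤ (P {x | |Y (n k) x| < c - 2*δ}).toReal :=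
    integral_trapFn_le_meas P (hYmeas (n k)) hδpos (le_refl _)
  -- conclude
  have hfinal_up : (P E).toReal ≤ Lν + η/2 := by
    have := hPE_upper
    have h2 := le_trans htrapU hkU.le
    linarith
  have hfinal_lo : Lν - η/2 ≤ (P E).toReal := by
    have h2 := le_trans hkL.le htrapL
    linarith
  rw [Real.dist_eq]
  have : |(P E).toReal - Lν| ≤ η/2 := abs_le.2 ⟨by linarith, by linarith⟩
  linarith
end
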